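/- arXiv:1611.04098 — 3 statements merged into one kernel-verified Lean document; each statement's English description precedes it below -/
import Mathlib

section
/- Let (W,S) be a Coxeter system, w, x ∈ W, let s = s j be a simple reflection, and suppose d(x, w) < d(x, w * s). If t = s i and t' = s i' are simple reflections such that both d(x * t, w * s) < d(x * t, w) and d(x * t', w * s) < d(x * t', w) (i.e. both (x, x * t) and (x, x * t') are grey edges for the pair (w, w * s)), then x * t = x * t' (equivalently i = i'). Hence every vertex of the Cayley graph is adjacent to at most one grey edge. -/
open List

namespace GreyAux

section Geometric

variable {B : Type*}


/-- Entries of the standard bilinear form. -/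
noncomputable def kco (M : CoxeterMatrix B) (a b : B) : ℝ :=
  -Real.cos (Real.pi / (M a b : ℝ))

theorem kco_diag (M : CoxeterMatrix B) (a : B) : kco M a a = 1 := by
  rw [kco, M.diagonal a, Nat.cast_one, div_one, Real.cos_pi, neg_neg]

theorem kco_symm (M : CoxeterMatrix B) (a b : B) : kco M a b = kco M b a := by
  rw [kco, kco, M.symmetric a b]

/-- Pairing of a vector with the root attached to an index. -/
noncomputable def pairf (M : CoxeterMatrix B) (v : B →₀ ℝ) (a : B) : ℝ :=
  v.sum fun b r => r * kco M b a

theorem pairf_add (M : CoxeterMatrix B) (v w : B →₀ ℝ) (a : B) :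
    pairf M (v + w) a = pairf M v a + pairf M w a :=
  Finsupp.sum_add_index' (fun _ => zero_mul _) (fun b b₁ b₂ => add_mul b₁ b₂ _)

theorem pairf_single (M : CoxeterMatrix B) (b : B) (r : ℝ) (a : B) :
    pairf M (Finsupp.single b r) a = r * kco M b a :=
  Finsupp.sum_single_index (zero_mul _)

theorem geom_invol (M : CoxeterMatrix B) (a : B) :
    Function.Involutive (fun v : B →₀ ℝ => v + Finsupp.single a (-2 * pairf M v a)) := by
  intro v
  have hp : pairf M (v + Finsupp.single a (-2 * pairf M v a)) a = -(pairf M v a) := by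
    rw [pairf_add, pairf_single, kco_diag, mul_one]
    ring
  show (v + Finsupp.single a (-2 * pairf M v a))
      + Finsupp.single a (-2 * pairf M (v + Finsupp.single a (-2 * pairf M v a)) a) = v
  rw [hp, add_assoc, ← Finsupp.single_add]
  norm_num

/-- The geometric reflection attached to an index, as a permutation of `B →₀ ℝ`. -/
noncomputable def geomRep (M : CoxeterMatrix B) (a : B) : Equiv.Perm (B →₀ ℝ) :=
  Function.Involutive.toPerm _ (geom_invol M a)

theorem geomRep_apply (M : CoxeterMatrix B) (a : B) (v : B →₀ ℝ) :
    geomRep M a v = v + Finsupp.single a (-2 * pairf M v a) := rfl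

theorem geom_liftable (M : CoxeterMatrix B) : M.IsLiftable (geomRep M) := by
  intro a b
  by_cases hab : a = b
  · subst hab
    rw [M.diagonal a, pow_one]
    apply Equiv.ext
    intro v
    rw [Equiv.Perm.mul_apply]
    exact geom_invol M a v
  by_cases hm0 : M a b = 0
  · rw [hm0, pow_zero]
  -- main case : m ≥ 2
  have hm2 : 2 ≤ M a b := by
    have := M.off_diagonal a b hab
    omega
  set m : ℕ := M a b with hm
  set θ : ℝ := Real.pi / (m : ℝ) with hθ
  set c : ℝ := Real.cos θ with hc
  have hmpos : (0 : ℝ) < (m : ℝ) := by exact_mod_cast (by omega : 0 < m)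
  have hθpos : 0 < θ := div_pos Real.pi_pos hmpos
  have hθlt : θ < Real.pi := by
    rw [hθ]
    apply div_lt_self Real.pi_pos
    exact_mod_cast (by omega : 1 < m)
  have hspos : 0 < Real.sin θ := Real.sin_pos_of_pos_of_lt_pi hθpos hθlt
  have hsne : Real.sin θ ≠ 0 := ne_of_gt hspos
  have hs2 : Real.sin θ ^ 2 = 1 - c ^ 2 := by
    have := Real.sin_sq_add_cos_sq θ
    rw [← hc] at this
    linarith
  have hkab : kco M a b = -c := by rw [kco, ← hm, ← hθ, ← hc]
  have hkba : kco M b a = -c := by rw [kco_symm, hkab]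
  have hkaa : kco M a a = 1 := kco_diag M a
  have hkbb : kco M b b = 1 := kco_diag M b
  -- the auxiliary sequence  U n = sin (2nθ) / sin θ
  set U : ℕ → ℝ := fun n => Real.sin (2 * n * θ) / Real.sin θ with hU
  have hC0 : Real.cos (2 * ((0 : ℕ) : ℝ) * θ) = 1 := by norm_num
  have hU0 : U 0 = 0 := by simp [hU]
  have hcast : ∀ n : ℕ, ((n + 1 : ℕ) : ℝ) = (n : ℝ) + 1 := by intro n; push_cast; ring
  have hrecC : ∀ n : ℕ, Real.cos (2 * ((n + 1 : ℕ) : ℝ) * θ)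
      = Real.cos (2 * n * θ) * (2 * c ^ 2 - 1) - U n * (2 * c * (1 - c ^ 2)) := by
    intro n
    have hang : (2 * ((n : ℝ) + 1)) * θ = 2 * n * θ + 2 * θ := by ring
    rw [hcast n, hang, Real.cos_add, Real.cos_two_mul, Real.sin_two_mul, ← hc, ← hs2]
    simp only [hU]
    field_simp
  have hrecU : ∀ n : ℕ, U (n + 1)
      = U n * (2 * c ^ 2 - 1) + Real.cos (2 * n * θ) * (2 * c) := by
    intro n
    simp only [hU]
    rw [hcast n, show (2 * ((n : ℝ) + 1)) * θ = 2 * n * θ + 2 * θ by ring, Real.sin_add,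
      Real.cos_two_mul, Real.sin_two_mul, ← hc]
    field_simp
  -- main induction
  have main : ∀ (n : ℕ) (v : B →₀ ℝ), ∃ P Q : ℝ,
      ((geomRep M a * geomRep M b) ^ n) v = v + Finsupp.single a P + Finsupp.single b Q
      ∧ pairf M (((geomRep M a * geomRep M b) ^ n) v) a
          = Real.cos (2 * n * θ) * pairf M v a - U n * (c * pairf M v a + pairf M v b)
      ∧ pairf M (((geomRep M a * geomRep M b) ^ n) v) b
          = Real.cos (2 * n * θ) * pairf M v b + U n * (pairf M v a + c * pairf M v b) := by
    intro n v
    induction n with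
    | zero =>
      refine ⟨0, 0, ?_, ?_, ?_⟩ <;> simp [hU0]
    | succ n ih =>
      obtain ⟨P, Q, huv, hXa, hXb⟩ := ih
      set un := ((geomRep M a * geomRep M b) ^ n) v with hun
      have hstep : ((geomRep M a * geomRep M b) ^ (n + 1)) v
          = geomRep M a (geomRep M b un) := by
        rw [pow_succ', Equiv.Perm.mul_apply, Equiv.Perm.mul_apply]
      set X := pairf M un a with hX
      set Y := pairf M un b with hY
      have h1 : geomRep M b un = un + Finsupp.single b (-2 * Y) := by
        rw [geomRep_apply, hY]
      have hpa1 : pairf M (geomRep M b un) a = X + 2 * c * Y := by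
        rw [h1, pairf_add, pairf_single, hkba, hX]
        ring
      have hpb1 : pairf M (geomRep M b un) b = -Y := by
        rw [h1, pairf_add, pairf_single, hkbb, hY]
        ring
      have h2 : geomRep M a (geomRep M b un)
          = un + Finsupp.single b (-2 * Y) + Finsupp.single a (-2 * (X + 2 * c * Y)) := by
        rw [geomRep_apply, hpa1, h1]
      have hpa2 : pairf M (geomRep M a (geomRep M b un)) a = -(X + 2 * c * Y) := by
        rw [geomRep_apply, pairf_add, pairf_single, hpa1, hkaa]
        ring
      have hpb2 : pairf M (geomRep M a (geomRep M b un)) b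
          = 2 * c * X + (4 * c ^ 2 - 1) * Y := by
        rw [geomRep_apply, pairf_add, pairf_single, hpa1, hpb1, hkab]
        ring
      refine ⟨P + (-2 * (X + 2 * c * Y)), Q + (-2 * Y), ?_, ?_, ?_⟩
      · rw [hstep, h2, huv]
        rw [Finsupp.single_add, Finsupp.single_add]
        abel
      · rw [hstep, hpa2, hrecC n, hrecU n, hXa, hXb]
        ring
      · rw [hstep, hpb2, hrecC n, hrecU n, hXa, hXb]
        ring
  -- conclusion
  apply Equiv.ext
  intro v
  obtain ⟨P, Q, huv, hXa, hXb⟩ := main m v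
  have hang : 2 * (m : ℝ) * θ = 2 * Real.pi := by
    rw [hθ]
    field_simp
  have hcosm : Real.cos (2 * (m : ℝ) * θ) = 1 := by rw [hang, Real.cos_two_pi]
  have hUm : U m = 0 := by
    simp only [hU]
    rw [hang, Real.sin_two_pi, zero_div]
  rw [hcosm, hUm] at hXa hXb
  have hpma : pairf M (((geomRep M a * geomRep M b) ^ m) v) a
      = pairf M v a + (P - c * Q) := by
    rw [huv, pairf_add, pairf_add, pairf_single, pairf_single, hkaa, hkba]
    ring
  have hpmb : pairf M (((geomRep M a * geomRep M b) ^ m) v) b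
      = pairf M v b + (Q - c * P) := by
    rw [huv, pairf_add, pairf_add, pairf_single, pairf_single, hkab, hkbb]
    ring
  have hP : P - c * Q = 0 := by rw [hpma] at hXa; linarith
  have hQ : Q - c * P = 0 := by rw [hpmb] at hXb; linarith
  have hfact : P * (1 - c ^ 2) = 0 := by linear_combination hP + c * hQ
  have hc2 : 0 < 1 - c ^ 2 := by
    have := pow_pos hspos 2
    linarith [hs2]
  have hP0 : P = 0 := by
    rcases mul_eq_zero.mp hfact with h | h
    · exact h
    · linarith
  have hQ0 : Q = 0 := by
    rw [hP0] at hQ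
    linarith
  rw [Equiv.Perm.one_apply, huv, hP0, hQ0]
  simp


end Geometric

variable {B : Type*} {W : Type*} [Group W] {M : CoxeterMatrix B} (cs : CoxeterSystem M W)

local prefix:100 "s" => cs.simple
local prefix:100 "π" => cs.wordProd
local prefix:100 "ℓ" => cs.length
local prefix:100 "ris" => cs.rightInvSeq

noncomputable local instance : DecidableEq W := Classical.decEq W

/-- The permutation of `W × ZMod 2` attached to a simple reflection. -/
noncomputable def permRep (i : B) : Equiv.Perm (W × ZMod 2) :=
  Function.Involutive.toPerm
    (fun p => (s i * p.1 * s i, p.2 + if p.1 = s i then 1 else 0)) (by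
      rintro ⟨t, z⟩
      have hss : s i * s i = 1 := cs.simple_mul_simple_self i
      have h1 : s i * (s i * t * s i) * s i = t := by
        calc s i * (s i * t * s i) * s i = (s i * s i) * t * (s i * s i) := by group
        _ = t := by rw [hss]; group
      have h2 : (s i * t * s i = s i) ↔ (t = s i) := by
        constructor
        · intro h
          calc t = s i * (s i * t * s i) * s i := h1.symm
          _ = s i * s i * s i := by rw [h]
          _ = s i := by rw [hss, one_mul]
        · rintro rfl; rw [mul_assoc, hss, mul_one]
      show (s i * (s i * t * s i) * s i,
        (z + if t = s i then 1 else 0) + if s i * t * s i = s i then 1 else 0) = (t, z)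
      rw [h1, if_congr h2 rfl rfl]
      have h11 : (1 : ZMod 2) + 1 = 0 := rfl
      by_cases ht : t = s i <;> simp [ht, add_assoc, h11])

theorem permRep_apply (i : B) (p : W × ZMod 2) :
    permRep cs i p = (s i * p.1 * s i, p.2 + if p.1 = s i then 1 else 0) := rfl

theorem rightInvSeq_cons (i : B) (ω : List B) :
    ris (i :: ω) = (π ω)⁻¹ * s i * π ω :: ris ω := by
  simp [CoxeterSystem.rightInvSeq, mul_assoc]

/-- Action of the product of the permutations attached to a word. -/
theorem prod_permRep_apply (ω : List B) (p : W × ZMod 2) :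
    (List.prod (ω.map (permRep cs))) p
      = (π ω * p.1 * (π ω)⁻¹, p.2 + (List.count p.1 (ris ω) : ZMod 2)) := by
  induction ω generalizing p with
  | nil => simp
  | cons i ω ih =>
    obtain ⟨t, z⟩ := p
    rw [List.map_cons, List.prod_cons, Equiv.Perm.mul_apply, ih ⟨t, z⟩, permRep_apply,
      rightInvSeq_cons]
    have hiff : ((π ω)⁻¹ * s i * π ω = t) ↔ (π ω * t * (π ω)⁻¹ = s i) := by
      constructor
      · rintro rfl; group
      · rintro h; rw [← h]; group
    have hcount : List.count t ((π ω)⁻¹ * s i * π ω :: ris ω)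
        = List.count t (ris ω) + if π ω * t * (π ω)⁻¹ = s i then 1 else 0 := by
      rw [List.count_cons]
      congr 1
      simp [hiff]
    rw [hcount]
    refine Prod.ext ?_ ?_
    · show s i * (π ω * t * (π ω)⁻¹) * s i = π (i :: ω) * t * (π (i :: ω))⁻¹
      rw [cs.wordProd_cons, mul_inv_rev, cs.inv_simple]
      group
    · show z + (List.count t (ris ω) : ZMod 2) + _ = _
      push_cast
      by_cases h : π ω * t * (π ω)⁻¹ = s i <;> simp [h] <;> ring

theorem simple_mul_pow (i j : B) (e : ℕ) :
    s j * (s i * s j) ^ e = ((s i * s j) ^ e)⁻¹ * s j := by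
  induction e with
  | zero => simp
  | succ e ih =>
    have hq : s j * (s i * s j) = (s i * s j)⁻¹ * s j := by
      rw [mul_inv_rev, cs.inv_simple, cs.inv_simple, ← mul_assoc]
    calc s j * (s i * s j) ^ (e + 1) = (s j * (s i * s j) ^ e) * (s i * s j) := by
          rw [pow_succ]; group
    _ = ((s i * s j) ^ e)⁻¹ * (s j * (s i * s j)) := by rw [ih]; group
    _ = ((s i * s j) ^ e)⁻¹ * ((s i * s j)⁻¹ * s j) := by rw [hq]
    _ = ((s i * s j) ^ (e + 1))⁻¹ * s j := by
        rw [pow_succ', mul_inv_rev]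
        simp [mul_assoc]

theorem g_formula (i j : B) (k : ℕ) :
    (π (CoxeterSystem.alternatingWord i j k))⁻¹ * s (if Even k then j else i)
        * π (CoxeterSystem.alternatingWord i j k)
      = ((s i * s j) ^ k)⁻¹ * s j := by
  rw [cs.prod_alternatingWord_eq_mul_pow]
  rcases Nat.even_or_odd k with hk | hk
  · obtain ⟨r, hr⟩ := hk
    have h2 : k / 2 = r := by omega
    rw [if_pos ⟨r, hr⟩, if_pos ⟨r, hr⟩, h2, one_mul]
    calc ((s i * s j) ^ r)⁻¹ * s j * (s i * s j) ^ r
        = ((s i * s j) ^ r)⁻¹ * (s j * (s i * s j) ^ r) := by group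
    _ = ((s i * s j) ^ r)⁻¹ * (((s i * s j) ^ r)⁻¹ * s j) := by rw [simple_mul_pow cs]
    _ = ((s i * s j) ^ k)⁻¹ * s j := by
        rw [hr, pow_add, mul_inv_rev]
        simp [mul_assoc]
  · obtain ⟨r, hr⟩ := hk
    have hne : ¬ Even k := by rw [hr]; exact Nat.not_even_two_mul_add_one r
    have h2 : k / 2 = r := by omega
    rw [if_neg hne, if_neg hne, h2]
    have key : s j * s i * s j = (s i * s j)⁻¹ * s j := by
      rw [mul_inv_rev, cs.inv_simple, cs.inv_simple]
    calc (s j * (s i * s j) ^ r)⁻¹ * s i * (s j * (s i * s j) ^ r)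
        = ((s i * s j) ^ r)⁻¹ * (s j * s i * s j) * (s i * s j) ^ r := by
          rw [mul_inv_rev, cs.inv_simple]; group
    _ = ((s i * s j) ^ r)⁻¹ * ((s i * s j)⁻¹ * (s j * (s i * s j) ^ r)) := by rw [key]; group
    _ = ((s i * s j) ^ r)⁻¹ * ((s i * s j)⁻¹ * (((s i * s j) ^ r)⁻¹ * s j)) := by
          rw [simple_mul_pow cs]
    _ = ((s i * s j) ^ k)⁻¹ * s j := by
        have hp : (s i * s j) ^ k = (s i * s j) ^ r * ((s i * s j) * (s i * s j) ^ r) := by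
          rw [← pow_succ', ← pow_add, hr]
          congr 1
          omega
        rw [hp, mul_inv_rev, mul_inv_rev]
        simp [mul_assoc]

theorem ris_alternatingWord (i j : B) (n : ℕ) :
    ris (CoxeterSystem.alternatingWord i j n)
      = ((List.range n).map (fun k => ((s i * s j) ^ k)⁻¹ * s j)).reverse := by
  induction n with
  | zero => simp [CoxeterSystem.alternatingWord]
  | succ n ih =>
    rw [CoxeterSystem.alternatingWord_succ', rightInvSeq_cons, ih, List.range_succ]
    simp [g_formula cs i j n]
theorem count_ris_alternatingWord_even (i j : B) (t : W) :
    Even (List.count t (ris (CoxeterSystem.alternatingWord i j (2 * M i j)))) := by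
  rw [ris_alternatingWord, List.count_reverse, two_mul, List.range_add]
  have hmap : (List.range (M i j)).map
        ((fun k => ((s i * s j) ^ k)⁻¹ * s j) ∘ (fun x => M i j + x))
      = (List.range (M i j)).map (fun k => ((s i * s j) ^ k)⁻¹ * s j) := by
    apply List.map_congr_left
    intro k _
    show ((s i * s j) ^ (M i j + k))⁻¹ * s j = ((s i * s j) ^ k)⁻¹ * s j
    rw [pow_add, cs.simple_mul_simple_pow i j, one_mul]
  rw [List.map_append, List.map_map, hmap, List.count_append]
  exact ⟨_, rfl⟩

theorem isLiftable_permRep : M.IsLiftable (permRep cs) := by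
  intro i j
  have hword : ∀ m : ℕ, (permRep cs i * permRep cs j) ^ m
      = ((CoxeterSystem.alternatingWord i j (2 * m)).map (permRep cs)).prod := by
    intro m
    induction m with
    | zero => simp [CoxeterSystem.alternatingWord]
    | succ m ih =>
      have h2 : 2 * (m + 1) = (2 * m + 1) + 1 := by omega
      rw [h2, CoxeterSystem.alternatingWord_succ', CoxeterSystem.alternatingWord_succ']
      have he1 : ¬ Even (2 * m + 1) := by simp [Nat.even_add_one]
      have he2 : Even (2 * m) := even_two_mul m
      rw [if_neg he1, if_pos he2]
      rw [List.map_cons, List.map_cons, List.prod_cons, List.prod_cons, ← ih, pow_succ']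
      rw [mul_assoc]
  rw [hword]
  apply Equiv.ext
  rintro ⟨t, z⟩
  rw [prod_permRep_apply]
  have hprod : π (CoxeterSystem.alternatingWord i j (2 * M i j)) = 1 := by
    rw [cs.prod_alternatingWord_eq_mul_pow, if_pos (even_two_mul _)]
    have : 2 * M i j / 2 = M i j := by omega
    rw [this, one_mul, cs.simple_mul_simple_pow i j]
  obtain ⟨c, hc⟩ := count_ris_alternatingWord_even cs i j t
  rw [hprod, hc]
  have : ((c + c : ℕ) : ZMod 2) = 0 := by
    push_cast
    ring_nf
    have h2 : (2 : ZMod 2) = 0 := by decide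
    rw [h2, mul_zero]
  rw [this]
  simp

/-- The homomorphism `W →* Perm (W × ZMod 2)`. -/
noncomputable def permRepHom : W →* Equiv.Perm (W × ZMod 2) :=
  cs.lift ⟨permRep cs, isLiftable_permRep cs⟩

theorem permRepHom_wordProd (ω : List B) :
    permRepHom cs (π ω) = (ω.map (permRep cs)).prod := by
  induction ω with
  | nil => simp [cs.wordProd_nil]
  | cons i ω ih =>
    rw [cs.wordProd_cons, List.map_cons, List.prod_cons, map_mul, ih]
    congr 1
    exact cs.lift_apply_simple (isLiftable_permRep cs) i

theorem count_parity_eq {ω ω' : List B} (h : π ω = π ω') (t : W) :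
    (List.count t (ris ω) : ZMod 2) = (List.count t (ris ω') : ZMod 2) := by
  have := congrArg (fun f : Equiv.Perm (W × ZMod 2) => f ⟨t, 0⟩)
    (by rw [← permRepHom_wordProd, ← permRepHom_wordProd, h] :
      (ω.map (permRep cs)).prod = (ω'.map (permRep cs)).prod)
  simp only [prod_permRep_apply] at this
  have := congrArg Prod.snd this
  simpa using this

/-- Strong exchange property, for simple reflections. -/
theorem mem_rightInvSeq_of_isRightDescent {ω : List B} (hred : cs.IsReduced ω) (j : B)
    (h : ℓ (π ω * s j) < ℓ (π ω)) : s j ∈ ris ω := by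
  obtain ⟨ω', hred', hv⟩ := cs.exists_reduced_word' (π ω * s j)
  have hw : π (ω'.concat j) = π ω := by
    rw [cs.wordProd_concat, ← hv, mul_assoc, cs.simple_mul_simple_self, mul_one]
  have hpar := count_parity_eq cs hw (s j)
  rw [cs.rightInvSeq_concat] at hpar
  have hnotmem : s j ∉ ris ω' := by
    intro hmem
    have := (cs.isRightInversion_of_mem_rightInvSeq hred' hmem).2
    rw [← hv, mul_assoc, cs.simple_mul_simple_self, mul_one] at this
    omega
  have hcnt0 : List.count (s j) (ris ω') = 0 := List.count_eq_zero.mpr hnotmem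
  have hconj : (MulAut.conj (s j)) (s j) = s j := by
    simp
  have hcntmap : List.count (s j) (List.map (⇑(MulAut.conj (s j))) (ris ω')) = 0 := by
    have hcm := List.count_map_of_injective (ris ω') (⇑(MulAut.conj (s j)))
      (MulAut.conj (s j)).injective (s j)
    rw [hconj] at hcm
    exact hcm.trans hcnt0
  rw [List.concat_eq_append, List.count_append, hcntmap] at hpar
  simp at hpar
  by_contra hnm
  rw [List.count_eq_zero.mpr hnm] at hpar
  exact one_ne_zero ((by simpa using hpar.symm) : (1 : ZMod 2) = 0)
theorem key_lemma (u : W) (i j : B)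
    (h0 : ℓ u < ℓ (u * s j)) (h1 : ℓ (s i * u * s j) < ℓ (s i * u)) :
    s i * u = u * s j := by
  -- Step a : ℓ (u * s j) = ℓ u + 1
  have hus : ℓ (u * s j) = ℓ u + 1 := by
    rcases cs.length_mul_simple u j with h | h
    · exact h
    · omega
  -- Step b : ℓ (s i * u) = ℓ u + 1
  have hsu : ℓ (s i * u) = ℓ u + 1 := by
    rcases cs.length_simple_mul u i with h | h
    · exact h
    · exfalso
      have heq : u * s j = s i * (s i * u * s j) := by
        rw [← mul_assoc, ← mul_assoc, cs.simple_mul_simple_self, one_mul]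
      have hb : ℓ (s i * (s i * u * s j)) ≤ ℓ (s i * u * s j) + 1 := by
        rcases cs.length_simple_mul (s i * u * s j) i with h' | h' <;> omega
      rw [← heq] at hb
      omega
  obtain ⟨ωu, hredu, hu⟩ := cs.exists_reduced_word' u
  -- the word i :: ωu is reduced, with product s i * u
  have hprod : π (i :: ωu) = s i * u := by rw [cs.wordProd_cons, ← hu]
  have hred2 : cs.IsReduced (i :: ωu) := by
    show ℓ (π (i :: ωu)) = (i :: ωu).length
    rw [hprod, hsu, List.length_cons]
    have : ℓ u = ωu.length := by rw [hu]; exact hredu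
    omega
  have hdesc : ℓ (π (i :: ωu) * s j) < ℓ (π (i :: ωu)) := by
    rw [hprod]
    exact h1
  have hmem := mem_rightInvSeq_of_isRightDescent cs hred2 j hdesc
  rw [rightInvSeq_cons, ← hu] at hmem
  rcases List.mem_cons.mp hmem with h | h
  · rw [h]
    group
  · exfalso
    have := (cs.isRightInversion_of_mem_rightInvSeq hredu h).2
    rw [← hu] at this
    omega

theorem simple_injective : Function.Injective cs.simple := by
  intro i i' h
  by_contra hne
  have h1 := cs.lift_apply_simple (geom_liftable M) i
  have h2 := cs.lift_apply_simple (geom_liftable M) i'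
  have hgeom : geomRep M i = geomRep M i' := by rw [← h1, ← h2, h]
  have happ := congrArg (fun f : Equiv.Perm (B →₀ ℝ) => f (Finsupp.single i 1)) hgeom
  simp only [geomRep_apply] at happ
  have hcoord := congrArg (fun v : B →₀ ℝ => v i) happ
  have hpii : pairf M (Finsupp.single i (1 : ℝ)) i = 1 := by
    rw [pairf_single, kco_diag, mul_one]
  simp only [Finsupp.add_apply, Finsupp.single_apply, hpii] at hcoord
  rw [if_neg (Ne.symm hne)] at hcoord
  norm_num at hcoord

end GreyAux

/-- Every vertex of the Cayley graph of a Coxeter system is adjacent to at most one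
grey edge for a fixed pair `(w, w * s)` (distance `d(x, y) = ℓ(x⁻¹ * y)`): if both
`(x, x * t)` and `(x, x * t')` are grey edges, then `x * t = x * t'`
(equivalently, `i = i'`). -/
theorem grey_edge_unique {B W : Type*} [Group W] {M : CoxeterMatrix B}
    (cs : CoxeterSystem M W) (w x : W) (j i i' : B)
    (h0 : cs.length (x⁻¹ * w) < cs.length (x⁻¹ * (w * cs.simple j)))
    (h1 : cs.length ((x * cs.simple i)⁻¹ * (w * cs.simple j)) <
      cs.length ((x * cs.simple i)⁻¹ * w))
    (h2 : cs.length ((x * cs.simple i')⁻¹ * (w * cs.simple j)) <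
      cs.length ((x * cs.simple i')⁻¹ * w)) :
    x * cs.simple i = x * cs.simple i' ∧ i = i' := by
  have e0 : x⁻¹ * (w * cs.simple j) = (x⁻¹ * w) * cs.simple j := by group
  have hml : ∀ k : B, (x * cs.simple k)⁻¹ * (w * cs.simple j)
      = cs.simple k * (x⁻¹ * w) * cs.simple j := by
    intro k
    rw [mul_inv_rev, cs.inv_simple]
    group
  have hml2 : ∀ k : B, (x * cs.simple k)⁻¹ * w = cs.simple k * (x⁻¹ * w) := by
    intro k
    rw [mul_inv_rev, cs.inv_simple]
    group
  rw [e0] at h0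
  rw [hml i, hml2 i] at h1
  rw [hml i', hml2 i'] at h2
  have key1 := GreyAux.key_lemma cs (x⁻¹ * w) i j h0 h1
  have key2 := GreyAux.key_lemma cs (x⁻¹ * w) i' j h0 h2
  have hss : cs.simple i = cs.simple i' := mul_right_cancel (key1.trans key2.symm)
  exact ⟨by rw [hss], GreyAux.simple_injective cs hss⟩
end

section
/- Let (W,S) be a Coxeter system with finite index set B, let w ∈ W and let s = s i be a simple reflection with ℓ(w * s) > ℓ(w). Then for every n : ℕ, the number of lazy walks of length n from the identity to w * s is at most the number of lazy walks of length n from the identity to w: N n (w * s) ≤ N n w. -/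
set_option linter.unusedSectionVars false

open List

noncomputable section LazyWalkAux
open scoped Classical

namespace LazyWalkAux

variable {B W : Type*} [Group W] {M : CoxeterMatrix B} (cs : CoxeterSystem M W)

local prefix:100 "σ" => cs.simple
local prefix:100 "π" => cs.wordProd
local prefix:100 "ℓ" => cs.length

/-! ### The sign permutation representation -/

def etaFun (i : B) : W × ZMod 2 → W × ZMod 2 :=
  fun x => (σ i * x.1 * σ i, x.2 + if x.1 = σ i then 1 else 0)

lemma etaFun_involutive (i : B) : Function.Involutive (etaFun cs i) := by
  intro x
  obtain ⟨t, e⟩ := x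
  simp only [etaFun]
  refine Prod.ext ?_ ?_
  · show σ i * (σ i * t * σ i) * σ i = t
    calc σ i * (σ i * t * σ i) * σ i = (σ i * σ i) * t * (σ i * σ i) := by group
    _ = t := by rw [cs.simple_mul_simple_self]; group
  · show e + (if t = σ i then 1 else 0) + (if σ i * t * σ i = σ i then 1 else 0) = e
    have hiff : (σ i * t * σ i = σ i) ↔ (t = σ i) := by
      constructor
      · intro h
        have h2 : t = (σ i)⁻¹ * (σ i * t * σ i) * (σ i)⁻¹ := by group
        rw [h, cs.inv_simple, cs.simple_mul_simple_self, one_mul] at h2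
        exact h2
      · intro h; rw [h, cs.simple_mul_simple_self, one_mul]
    rw [if_congr hiff rfl rfl]
    have h11 : (1 : ZMod 2) + 1 = 0 := rfl
    by_cases h : t = σ i
    · rw [if_pos h, add_assoc, h11, add_zero]
    · rw [if_neg h, add_zero, add_zero]

def eta (i : B) : Equiv.Perm (W × ZMod 2) := (etaFun_involutive cs i).toPerm _

@[simp] lemma eta_apply (i : B) (x : W × ZMod 2) :
    eta cs i x = (σ i * x.1 * σ i, x.2 + if x.1 = σ i then 1 else 0) := rfl

/-- indicator sum of a list -/
def sgn (l : List W) (t : W) : ZMod 2 := (l.map fun z => if z = t then (1 : ZMod 2) else 0).sum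

@[simp] lemma sgn_nil (t : W) : sgn ([] : List W) t = 0 := rfl

lemma sgn_cons (h : W) (l : List W) (t : W) :
    sgn (h :: l) t = (if h = t then 1 else 0) + sgn l t := by
  simp [sgn]

lemma sgn_append (l l' : List W) (t : W) :
    sgn (l ++ l') t = sgn l t + sgn l' t := by
  simp [sgn]

lemma rightInvSeq_cons (i : B) (ω : List B) :
    cs.rightInvSeq (i :: ω) = ((π ω)⁻¹ * σ i * π ω) :: cs.rightInvSeq ω := rfl

/-- Main formula for products of `eta` along a word. -/
lemma prod_map_eta_apply (ω : List B) (t : W) (e : ZMod 2) :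
    ((ω.map (eta cs)).prod) (t, e)
      = (π ω * t * (π ω)⁻¹, e + sgn (cs.rightInvSeq ω) t) := by
  induction ω generalizing t e with
  | nil => simp
  | cons i ω ih =>
    rw [map_cons, prod_cons, Equiv.Perm.mul_apply, ih, eta_apply]
    rw [rightInvSeq_cons, sgn_cons]
    refine Prod.ext ?_ ?_
    · show σ i * (π ω * t * (π ω)⁻¹) * σ i = π (i :: ω) * t * (π (i :: ω))⁻¹
      rw [cs.wordProd_cons, mul_inv_rev, cs.inv_simple]
      group
    · show e + sgn (cs.rightInvSeq ω) t + (if π ω * t * (π ω)⁻¹ = σ i then 1 else 0)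
        = e + ((if (π ω)⁻¹ * σ i * π ω = t then 1 else 0) + sgn (cs.rightInvSeq ω) t)
      have hiff : (π ω * t * (π ω)⁻¹ = σ i) ↔ ((π ω)⁻¹ * σ i * π ω = t) := by
        constructor
        · intro h; rw [← h]; group
        · intro h; rw [← h]; group
      rw [if_congr hiff rfl rfl]
      ring

/-! ### Alternating pair words -/

def W2 (i i' : B) : ℕ → List B
  | 0 => []
  | (p+1) => i :: i' :: W2 i i' p

lemma wordProd_W2 (i i' : B) (p : ℕ) : π (W2 i i' p) = (σ i * σ i') ^ p := by
  induction p with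
  | zero => simp [W2]
  | succ p ih =>
    show π (i :: i' :: W2 i i' p) = _
    rw [cs.wordProd_cons, cs.wordProd_cons, ih, pow_succ']
    group

lemma prod_map_eta_W2 (i i' : B) (p : ℕ) :
    ((W2 i i' p).map (eta cs)).prod = (eta cs i * eta cs i') ^ p := by
  induction p with
  | zero => simp [W2]
  | succ p ih =>
    show ((i :: i' :: W2 i i' p).map (eta cs)).prod = _
    rw [map_cons, map_cons, prod_cons, prod_cons, ih, pow_succ']
    group

lemma rightInvSeq_W2 (i i' : B) (p : ℕ) :
    cs.rightInvSeq (W2 i i' p)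
      = (((List.range (2*p)).map (fun k => ((σ i * σ i')⁻¹) ^ k * σ i')).reverse) := by
  induction p with
  | zero => simp [W2]
  | succ p ih =>
    show cs.rightInvSeq (i :: i' :: W2 i i' p) = _
    rw [rightInvSeq_cons, rightInvSeq_cons, ih, cs.wordProd_cons, wordProd_W2]
    have h2 : 2 * (p + 1) = (2*p + 1) + 1 := by ring
    rw [h2, List.range_succ, List.range_succ]
    simp only [map_append, map_cons, map_nil, reverse_append, reverse_cons, reverse_nil,
      nil_append, cons_append]
    set g := σ i * σ i' with hg
    have hss : σ i' * σ i' = 1 := cs.simple_mul_simple_self i'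
    have hconj : σ i' * g * σ i' = g⁻¹ := by
      rw [hg, mul_inv_rev, cs.inv_simple, cs.inv_simple]
      calc σ i' * (σ i * σ i') * σ i' = σ i' * σ i * (σ i' * σ i') := by group
      _ = σ i' * σ i := by rw [hss, mul_one]
    have hconjp : σ i' * g ^ p * σ i' = (g⁻¹) ^ p := by
      calc σ i' * g ^ p * σ i' = σ i' * g ^ p * (σ i')⁻¹ := by rw [cs.inv_simple]
      _ = (σ i' * g * (σ i')⁻¹) ^ p := (conj_pow).symm
      _ = (g⁻¹) ^ p := by rw [cs.inv_simple, hconj]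
    have h4 : σ i' * g ^ p = (g⁻¹) ^ p * σ i' := by
      calc σ i' * g ^ p = (σ i' * g ^ p * σ i') * σ i' := by
            rw [mul_assoc _ (σ i') (σ i'), hss, mul_one]
      _ = (g⁻¹) ^ p * σ i' := by rw [hconjp]
    have e2' : (σ i')⁻¹ * σ i * σ i' = g⁻¹ * σ i' := by
      rw [cs.inv_simple, hg, mul_inv_rev, cs.inv_simple, cs.inv_simple]
    congr 1
    · calc (σ i' * g ^ p)⁻¹ * σ i * (σ i' * g ^ p)
          = (g ^ p)⁻¹ * ((σ i')⁻¹ * σ i * σ i') * g ^ p := by group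
      _ = (g ^ p)⁻¹ * (g⁻¹ * σ i') * g ^ p := by rw [e2']
      _ = (g ^ p)⁻¹ * g⁻¹ * (σ i' * g ^ p) := by group
      _ = (g ^ p)⁻¹ * g⁻¹ * ((g⁻¹) ^ p * σ i') := by rw [h4]
      _ = ((g⁻¹) ^ p * g⁻¹ * (g⁻¹) ^ p) * σ i' := by rw [← inv_pow]; group
      _ = (g⁻¹) ^ (2*p+1) * σ i' := by
            rw [← pow_succ, ← pow_add]
            congr 2
            ring
    congr 1
    · calc (g ^ p)⁻¹ * σ i' * g ^ p
          = (g ^ p)⁻¹ * (σ i' * g ^ p) := by rw [mul_assoc]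
      _ = (g ^ p)⁻¹ * ((g⁻¹) ^ p * σ i') := by rw [h4]
      _ = ((g⁻¹) ^ p * (g⁻¹) ^ p) * σ i' := by rw [← inv_pow]; group
      _ = (g⁻¹) ^ (2*p) * σ i' := by
            rw [← pow_add]
            congr 2
            ring

lemma sgn_rightInvSeq_W2 (i i' : B) (t : W) :
    sgn (cs.rightInvSeq (W2 i i' (M i i'))) t = 0 := by
  rw [rightInvSeq_W2]
  set m := M i i' with hm
  set g := ((σ i * σ i')⁻¹ : W) with hg
  have hgm : g ^ m = 1 := by
    rw [hg, inv_pow, hm, cs.simple_mul_simple_pow, inv_one]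
  have hrev : ∀ l : List W, sgn l.reverse t = sgn l t := by
    intro l
    unfold sgn
    rw [List.map_reverse, List.sum_reverse]
  rw [hrev]
  have h2m : 2 * m = m + m := by ring
  rw [h2m, List.range_add, map_append, sgn_append]
  have : (List.map (m + ·) (List.range m)).map (fun k => g ^ k * σ i')
      = (List.range m).map (fun k => g ^ k * σ i') := by
    rw [List.map_map]
    apply List.map_congr_left
    intro k _
    show g ^ (m + k) * σ i' = g ^ k * σ i'
    rw [pow_add, hgm, one_mul]
  rw [this]
  set x := sgn ((List.range m).map (fun k => g ^ k * σ i')) t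
  show x + x = 0
  have : x + x = (1 + 1) * x := by ring
  rw [this]
  have h11 : (1 : ZMod 2) + 1 = 0 := rfl
  rw [h11, zero_mul]

lemma eta_liftable : CoxeterMatrix.IsLiftable M (eta cs) := by
  intro i i'
  rw [← prod_map_eta_W2]
  apply Equiv.ext
  intro x
  obtain ⟨t, e⟩ := x
  rw [prod_map_eta_apply, wordProd_W2, cs.simple_mul_simple_pow, sgn_rightInvSeq_W2]
  simp

/-- The sign representation of the Coxeter group. -/
def psi : W →* Equiv.Perm (W × ZMod 2) := cs.lift ⟨eta cs, eta_liftable cs⟩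

@[simp] lemma psi_simple (i : B) : psi cs (σ i) = eta cs i :=
  cs.lift_apply_simple (eta_liftable cs) i

/-- The parity cocycle. -/
def nu (v t : W) : ZMod 2 := ((psi cs v) (t, 0)).2

lemma psi_apply (v t : W) (e : ZMod 2) :
    psi cs v (t, e) = (v * t * v⁻¹, e + nu cs v t) := by
  induction v using cs.simple_induction_left generalizing t e with
  | one => simp [nu]
  | mul_simple_left v j ih =>
    have hm : psi cs (σ j * v) = eta cs j * psi cs v := by
      rw [map_mul, psi_simple]
    have hnu : nu cs (σ j * v) t = (0 : ZMod 2) + nu cs v t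
        + (if v * t * v⁻¹ = σ j then 1 else 0) := by
      unfold nu
      rw [hm, Equiv.Perm.mul_apply, ih, eta_apply]
      dsimp only
      ring
    rw [hm, Equiv.Perm.mul_apply, ih, eta_apply]
    refine Prod.ext ?_ ?_
    · show σ j * (v * t * v⁻¹) * σ j = (σ j * v) * t * (σ j * v)⁻¹
      rw [mul_inv_rev, cs.inv_simple]; group
    · show e + nu cs v t + (if v * t * v⁻¹ = σ j then 1 else 0) = e + nu cs (σ j * v) t
      rw [hnu]; ring

lemma nu_mul (a b t : W) : nu cs (a * b) t = nu cs b t + nu cs a (b * t * b⁻¹) := by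
  unfold nu
  rw [map_mul, Equiv.Perm.mul_apply, psi_apply, psi_apply, psi_apply]
  simp

lemma nu_one (t : W) : nu cs 1 t = 0 := by unfold nu; simp

lemma nu_simple (j : B) (t : W) : nu cs (σ j) t = if t = σ j then 1 else 0 := by
  unfold nu
  rw [psi_simple, eta_apply]
  simp

/-! ### Parity detects inversions -/

lemma nu_eq_zero_aux : ∀ n : ℕ, ∀ v t : W, ℓ v ≤ n → cs.IsReflection t →
    ℓ v < ℓ (v * t) → nu cs v t = 0 := by
  intro n
  induction n with
  | zero =>
    intro v t hv _ _
    have hv1 : v = 1 := cs.length_eq_zero_iff.mp (Nat.le_zero.mp hv)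
    rw [hv1, nu_one]
  | succ n IH =>
    intro v t hv ht hlt
    by_cases hv1 : v = 1
    · rw [hv1, nu_one]
    · obtain ⟨j, hj⟩ := cs.exists_rightDescent_of_ne_one hv1
      have hj' : ℓ (v * σ j) < ℓ v := hj
      have hvu : v = (v * σ j) * σ j := by
        rw [mul_assoc, cs.simple_mul_simple_self, mul_one]
      have htj : t ≠ σ j := by
        intro h
        rw [h] at hlt
        omega
      have hsplit : nu cs v t = nu cs (σ j) t + nu cs (v * σ j) (σ j * t * σ j) := by
        nth_rewrite 1 [hvu]
        have := nu_mul cs (v * σ j) (σ j) t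
        rwa [cs.inv_simple] at this
      rw [hsplit, nu_simple, if_neg htj, zero_add]
      have ht' : cs.IsReflection (σ j * t * σ j) := by
        have := ht.conj (σ j)
        rwa [cs.inv_simple] at this
      have hut' : (v * σ j) * (σ j * t * σ j) = v * t * σ j := by
        calc (v * σ j) * (σ j * t * σ j) = v * (σ j * σ j) * t * σ j := by group
        _ = v * t * σ j := by rw [cs.simple_mul_simple_self, mul_one]
      have hlen : ℓ (v * σ j) < ℓ ((v * σ j) * (σ j * t * σ j)) := by
        have hne : ℓ ((v * σ j) * (σ j * t * σ j)) ≠ ℓ (v * σ j) :=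
          ht'.length_mul_left_ne (v * σ j)
        rcases Nat.lt_or_ge (ℓ (v * σ j)) (ℓ ((v * σ j) * (σ j * t * σ j))) with h | h
        · exact h
        · exfalso
          have h1 : ℓ ((v * σ j) * (σ j * t * σ j)) < ℓ (v * σ j) := lt_of_le_of_ne h hne
          rw [hut'] at h1
          rcases cs.length_mul_simple (v * t) j with h2 | h2 <;> omega
      exact IH (v * σ j) (σ j * t * σ j) (by omega) ht' hlen

lemma nu_eq_zero_of (v t : W) (ht : cs.IsReflection t) (h : ℓ v < ℓ (v * t)) :
    nu cs v t = 0 :=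
  nu_eq_zero_aux cs (ℓ v) v t le_rfl ht h

lemma nu_refl_self (t : W) (ht : cs.IsReflection t) : nu cs t t = 1 := by
  obtain ⟨y, k, rfl⟩ := ht
  induction y using cs.simple_induction_left with
  | one =>
    simp only [one_mul, inv_one, mul_one]
    rw [nu_simple, if_pos rfl]
  | mul_simple_left y j ih =>
    set t' := y * σ k * y⁻¹ with ht'def
    have ht' : cs.IsReflection t' := ⟨y, k, rfl⟩
    have habs : σ j * y * σ k * (σ j * y)⁻¹ = σ j * (t' * σ j) := by
      rw [mul_inv_rev, cs.inv_simple, ht'def]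
      group
    rw [habs]
    set t := σ j * (t' * σ j) with htdef
    have hsplit : nu cs t t = nu cs (t' * σ j) t + nu cs (σ j) ((t' * σ j) * t * (t' * σ j)⁻¹) := by
      rw [htdef]
      exact nu_mul cs (σ j) (t' * σ j) t
    have ht'inv : t' * t' = 1 := ht'.mul_self
    have hc1 : (t' * σ j) * t * (t' * σ j)⁻¹ = t' := by
      rw [htdef, mul_inv_rev, cs.inv_simple]
      calc t' * σ j * (σ j * (t' * σ j)) * (σ j * t'⁻¹)
          = t' * (σ j * σ j) * t' * (σ j * σ j) * t'⁻¹ := by group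
      _ = t' := by rw [cs.simple_mul_simple_self]; group
    have hc2 : nu cs (t' * σ j) t = nu cs (σ j) t + nu cs t' (σ j * t * σ j) := by
      have := nu_mul cs t' (σ j) t
      rwa [cs.inv_simple] at this
    have hc3 : σ j * t * σ j = t' := by
      rw [htdef]
      calc σ j * (σ j * (t' * σ j)) * σ j = (σ j * σ j) * t' * (σ j * σ j) := by group
      _ = t' := by rw [cs.simple_mul_simple_self]; group
    rw [hsplit, hc1, hc2, hc3, ih, nu_simple, nu_simple]
    have hiff : (t = σ j) ↔ (t' = σ j) := by
      constructor
      · intro h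
        rw [← hc3, h, cs.simple_mul_simple_self, one_mul]
      · intro h
        rw [htdef, h, cs.simple_mul_simple_self, mul_one]
    by_cases h : t = σ j
    · rw [if_pos h, if_pos (hiff.mp h)]
      decide
    · rw [if_neg h, if_neg (fun hh => h (hiff.mpr hh))]
      decide

lemma nu_eq_one_of (v t : W) (ht : cs.IsReflection t) (h : ℓ (v * t) < ℓ v) :
    nu cs v t = 1 := by
  set u := v * t with hu
  have hvu : v = u * t := by
    rw [hu, mul_assoc, ht.mul_self, mul_one]
  have h0 : nu cs u t = 0 := by
    apply nu_eq_zero_of cs u t ht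
    rw [hu, mul_assoc, ht.mul_self, mul_one]
    exact h
  have hsplit : nu cs v t = nu cs t t + nu cs u (t * t * t⁻¹) := by
    rw [hvu]
    exact nu_mul cs u t t
  rw [hsplit, ht.mul_self, one_mul, ht.inv, h0, add_zero]
  exact nu_refl_self cs t ht

/-! ### Wall-crossing lemmas (left-handed versions) -/

lemma nu_inv_eq_zero (x t : W) (ht : cs.IsReflection t) (h : ℓ x < ℓ (t * x)) :
    nu cs x⁻¹ t = 0 := by
  apply nu_eq_zero_of cs x⁻¹ t ht
  have h1 : ℓ (x⁻¹ * t) = ℓ (t * x) := by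
    rw [← cs.length_inv (x⁻¹ * t), mul_inv_rev, inv_inv, ht.inv]
  rw [h1, cs.length_inv]
  exact h

lemma nu_inv_eq_one (x t : W) (ht : cs.IsReflection t) (h : ℓ (t * x) < ℓ x) :
    nu cs x⁻¹ t = 1 := by
  apply nu_eq_one_of cs x⁻¹ t ht
  have h1 : ℓ (x⁻¹ * t) = ℓ (t * x) := by
    rw [← cs.length_inv (x⁻¹ * t), mul_inv_rev, inv_inv, ht.inv]
  rw [h1, cs.length_inv]
  exact h

lemma nu_crossing (x t : W) (j : B) :
    nu cs (x * σ j)⁻¹ t = nu cs x⁻¹ t + (if x⁻¹ * t * x = σ j then 1 else 0) := by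
  rw [mul_inv_rev, cs.inv_simple]
  have := nu_mul cs (σ j) x⁻¹ t
  rw [this, nu_simple, inv_inv]

/-- The key wall lemma: if `x` is below the wall of `t` and multiplying by `s j`
does not cross the wall of `t`, then `x * s j` is also below the wall. -/
lemma no_crossing (x t : W) (j : B) (ht : cs.IsReflection t)
    (h : ℓ x < ℓ (t * x)) (hne : x⁻¹ * t * x ≠ σ j) :
    ℓ (x * σ j) < ℓ (t * (x * σ j)) := by
  have h0 : nu cs (x * σ j)⁻¹ t = 0 := by
    rw [nu_crossing, nu_inv_eq_zero cs x t ht h, if_neg hne, add_zero]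
  have hne2 : ℓ (t * (x * σ j)) ≠ ℓ (x * σ j) := ht.length_mul_right_ne (x * σ j)
  rcases Nat.lt_or_ge (ℓ (x * σ j)) (ℓ (t * (x * σ j))) with hlt | hge
  · exact hlt
  · exfalso
    have : ℓ (t * (x * σ j)) < ℓ (x * σ j) := lt_of_le_of_ne hge hne2
    have h1 := nu_inv_eq_one cs (x * σ j) t ht this
    rw [h0] at h1
    exact absurd h1 (by decide)

lemma crossing_eq (x t : W) (j : B) (ht : cs.IsReflection t)
    (h : ℓ x < ℓ (t * x)) (h2 : ℓ (t * (x * σ j)) < ℓ (x * σ j)) :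
    x⁻¹ * t * x = σ j := by
  by_contra hne
  have := no_crossing cs x t j ht h hne
  omega

/-! ### The geometric representation: injectivity of simple reflections -/

section Geometric
variable [Fintype B]

/-- Gram matrix entries of the standard bilinear form. -/
def gram (M : CoxeterMatrix B) (p q : B) : ℝ := - Real.cos (Real.pi / (M p q))

omit [Group W] in
lemma gram_diag (p : B) : gram M p p = 1 := by
  unfold gram
  rw [M.diagonal p]
  norm_num

omit [Group W] in
lemma gram_symm (p q : B) : gram M p q = gram M q p := by
  unfold gram
  rw [M.symmetric p q]

/-- The linear functional `v ↦ B(e_p, v)`. -/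
def gform (M : CoxeterMatrix B) (p : B) (v : B → ℝ) : ℝ := ∑ q, gram M p q * v q

omit [Group W] in
lemma gform_add (p : B) (v w : B → ℝ) : gform M p (v + w) = gform M p v + gform M p w := by
  unfold gform
  rw [← Finset.sum_add_distrib]
  congr 1
  funext q
  simp [mul_add]

omit [Group W] in
lemma gform_sub (p : B) (v w : B → ℝ) : gform M p (v - w) = gform M p v - gform M p w := by
  unfold gform
  rw [← Finset.sum_sub_distrib]
  congr 1
  funext q
  simp [mul_sub]

omit [Group W] in
lemma gform_smul (p : B) (c : ℝ) (v : B → ℝ) : gform M p (c • v) = c * gform M p v := by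
  unfold gform
  rw [Finset.mul_sum]
  congr 1
  funext q
  simp
  ring

omit [Group W] in
lemma gform_single (p q : B) : gform M p (Pi.single q 1 : B → ℝ) = gram M p q := by
  unfold gform
  rw [Finset.sum_eq_single q]
  · simp
  · intro r _ hr
    simp [Pi.single_apply, hr]
  · simp

/-- The reflection in the hyperplane orthogonal to `e_p`. -/
def grefl (M : CoxeterMatrix B) (p : B) (v : B → ℝ) : B → ℝ :=
  v - (2 * gform M p v) • (Pi.single p 1 : B → ℝ)

omit [Group W] in
lemma gform_grefl_self (p : B) (v : B → ℝ) : gform M p (grefl M p v) = - gform M p v := by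
  unfold grefl
  rw [gform_sub, gform_smul, gform_single, gram_diag]
  ring

omit [Group W] in
lemma grefl_involutive (p : B) : Function.Involutive (grefl M p) := by
  intro v
  have h := gform_grefl_self (M := M) p v
  unfold grefl at h ⊢
  rw [h, show (2 : ℝ) * -gform M p v = -(2 * gform M p v) by ring, neg_smul]
  abel

omit [Group W] in
lemma grefl_add (p : B) (v w : B → ℝ) : grefl M p (v + w) = grefl M p v + grefl M p w := by
  unfold grefl
  rw [gform_add, show (2:ℝ) * (gform M p v + gform M p w)
    = 2 * gform M p v + 2 * gform M p w by ring, add_smul]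
  abel

omit [Group W] in
lemma grefl_smul (p : B) (c : ℝ) (v : B → ℝ) : grefl M p (c • v) = c • grefl M p v := by
  unfold grefl
  rw [gform_smul, smul_sub, smul_smul]
  congr 2
  ring

omit [Group W] in
lemma grefl_fixed (p : B) (v : B → ℝ) (h : gform M p v = 0) : grefl M p v = v := by
  unfold grefl
  rw [h]
  simp

end Geometric

/-- `uu θ z = sin (z θ) / sin θ`: normalized Chebyshev-like function. -/
def uu (θ z : ℝ) : ℝ := Real.sin (z * θ) / Real.sin θ

omit [Group W] in
lemma uu_rec (θ z : ℝ) : uu θ (z + 2) = 2 * Real.cos θ * uu θ (z + 1) - uu θ z := by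
  unfold uu
  have h1 : (z + 2) * θ = ((z + 1) * θ) + θ := by ring
  have h2 : z * θ = ((z + 1) * θ) - θ := by ring
  rw [h1, h2, Real.sin_add, Real.sin_sub]
  ring

omit [Group W] in
lemma uu_rec' (θ z : ℝ) : uu θ z = 2 * Real.cos θ * uu θ (z + 1) - uu θ (z + 2) := by
  have := uu_rec θ z
  linarith

section Geometric2
variable [Fintype B]

omit [Group W] in
lemma grefl_pow_rel {M : CoxeterMatrix B} (i j : B) (hm : 2 ≤ M i j) (v : B → ℝ) :
    (grefl M i ∘ grefl M j)^[M i j] v = v := by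
  set m := M i j with hmdef
  have hm0 : (0 : ℝ) < (m : ℝ) := by positivity
  set θ := Real.pi / m with hθdef
  have hθpos : 0 < θ := by positivity
  have hθlt : θ < Real.pi := by
    rw [hθdef]
    apply div_lt_self Real.pi_pos
    exact_mod_cast Nat.lt_of_lt_of_le Nat.one_lt_two hm
  have hs : Real.sin θ ≠ 0 := ne_of_gt (Real.sin_pos_of_pos_of_lt_pi hθpos hθlt)
  set c := Real.cos θ with hcdef
  set e : B → (B → ℝ) := fun p => (Pi.single p 1 : B → ℝ) with hedef
  set A : (B → ℝ) → (B → ℝ) := grefl M i ∘ grefl M j with hAdef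
  have hgij : gram M i j = -c := by rw [hcdef, hθdef]; unfold gram; rw [hmdef]
  have hgji : gram M j i = -c := by rw [gram_symm]; exact hgij
  have key : ∀ z : ℝ, uu θ (z + 2) = 2 * c * uu θ (z + 1) - uu θ z := fun z => uu_rec θ z
  have key' : ∀ z : ℝ, uu θ z = 2 * c * uu θ (z + 1) - uu θ (z + 2) := fun z => uu_rec' θ z
  have h2pi : (2 * (m : ℝ)) * θ = 2 * Real.pi := by
    rw [hθdef]
    field_simp
  have hu0 : uu θ 0 = 0 := by unfold uu; simp
  have hu1 : uu θ 1 = 1 := by unfold uu; rw [one_mul, div_self hs]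
  have hu2m : uu θ (2 * m) = 0 := by
    unfold uu
    rw [h2pi, Real.sin_two_pi, zero_div]
  have hu2m1 : uu θ (2 * m + 1) = 1 := by
    unfold uu
    rw [show (2 * (m:ℝ) + 1) * θ = 2 * Real.pi + θ by rw [← h2pi]; ring]
    rw [Real.sin_add, Real.sin_two_pi, Real.cos_two_pi]
    field_simp
    ring
  have hu12m : uu θ (1 - 2 * m) = 1 := by
    unfold uu
    rw [show (1 - 2 * (m:ℝ)) * θ = θ - 2 * Real.pi by rw [← h2pi]; ring]
    rw [Real.sin_sub, Real.sin_two_pi, Real.cos_two_pi]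
    field_simp
    ring
  -- basic grefl values
  have hgrefl_jj : grefl M j (e j) = (-1 : ℝ) • e j := by
    show grefl M j (Pi.single j 1) = (-1 : ℝ) • (Pi.single j 1 : B → ℝ)
    unfold grefl
    rw [gform_single, gram_diag]
    ext q
    simp only [Pi.sub_apply, Pi.smul_apply, smul_eq_mul, Pi.single_apply]
    split_ifs <;> ring
  have hgrefl_ii : grefl M i (e i) = (-1 : ℝ) • e i := by
    show grefl M i (Pi.single i 1) = (-1 : ℝ) • (Pi.single i 1 : B → ℝ)
    unfold grefl
    rw [gform_single, gram_diag]
    ext q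
    simp only [Pi.sub_apply, Pi.smul_apply, smul_eq_mul, Pi.single_apply]
    split_ifs <;> ring
  have hgrefl_ji : grefl M j (e i) = e i + (2 * c) • e j := by
    show grefl M j (Pi.single i 1)
      = (Pi.single i 1 : B → ℝ) + (2 * c) • (Pi.single j 1 : B → ℝ)
    unfold grefl
    rw [gform_single, hgji]
    ext q
    simp only [Pi.sub_apply, Pi.add_apply, Pi.smul_apply, smul_eq_mul, Pi.single_apply]
    split_ifs <;> ring
  have hgrefl_ij : grefl M i (e j) = e j + (2 * c) • e i := by
    show grefl M i (Pi.single j 1)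
      = (Pi.single j 1 : B → ℝ) + (2 * c) • (Pi.single i 1 : B → ℝ)
    unfold grefl
    rw [gform_single, hgij]
    ext q
    simp only [Pi.sub_apply, Pi.add_apply, Pi.smul_apply, smul_eq_mul, Pi.single_apply]
    split_ifs <;> ring
  have hA : ∀ x y : ℝ, A (x • e i + y • e j)
      = ((4 * c ^ 2 - 1) * x - 2 * c * y) • e i + (2 * c * x - y) • e j := by
    intro x y
    show grefl M i (grefl M j (x • e i + y • e j)) = _
    rw [grefl_add, grefl_smul, grefl_smul, hgrefl_ji, hgrefl_jj]
    rw [show x • (e i + (2 * c) • e j) + y • (-1 : ℝ) • e j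
        = x • e i + (x * (2 * c) + y * (-1)) • e j from by module]
    rw [grefl_add, grefl_smul, grefl_smul, hgrefl_ii, hgrefl_ij]
    module
  -- the orbit computation
  have orbit : ∀ k : ℕ,
      A^[k] (e i) = uu θ (2 * k + 1) • e i + uu θ (2 * k) • e j ∧
      A^[k] (e j) = (- uu θ (2 * k)) • e i + uu θ (1 - 2 * k) • e j := by
    intro k
    induction k with
    | zero =>
      constructor
      · simp only [Function.iterate_zero, id_eq, Nat.cast_zero, mul_zero, zero_add, sub_zero]
        rw [hu1, hu0, one_smul, zero_smul, add_zero]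
      · simp only [Function.iterate_zero, id_eq, Nat.cast_zero, mul_zero, zero_add, sub_zero]
        rw [hu1, hu0, one_smul, neg_zero, zero_smul, zero_add]
    | succ k ih =>
      obtain ⟨ih1, ih2⟩ := ih
      have hQ : uu θ (2 * ((k : ℝ) + 1)) = 2 * c * uu θ (2 * k + 1) - uu θ (2 * k) := by
        have := key (2 * (k : ℝ))
        rw [show (2 * (k:ℝ) + 2) = 2 * ((k:ℝ) + 1) by ring] at this
        exact this
      have hP : uu θ (2 * ((k : ℝ) + 1) + 1)
          = (4 * c ^ 2 - 1) * uu θ (2 * k + 1) - 2 * c * uu θ (2 * k) := by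
        have h1 := key (2 * (k : ℝ) + 1)
        rw [show (2 * (k:ℝ) + 1 + 2) = 2 * ((k:ℝ) + 1) + 1 by ring,
          show (2 * (k:ℝ) + 1 + 1) = 2 * ((k:ℝ) + 1) by ring] at h1
        rw [h1, hQ]
        ring
      have hS : uu θ (1 - 2 * ((k : ℝ) + 1))
          = - (2 * c) * uu θ (2 * k) - uu θ (1 - 2 * k) := by
        have h1 := key' (1 - 2 * ((k : ℝ) + 1))
        rw [show (1 - 2 * ((k:ℝ) + 1) + 1) = - (2 * (k:ℝ)) by ring,
          show (1 - 2 * ((k:ℝ) + 1) + 2) = 1 - 2 * (k:ℝ) by ring] at h1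
        rw [h1]
        have hneg : uu θ (- (2 * (k:ℝ))) = - uu θ (2 * k) := by
          unfold uu
          rw [neg_mul, Real.sin_neg, neg_div]
        rw [hneg]
        ring
      have hR : - uu θ (2 * ((k : ℝ) + 1))
          = (4 * c ^ 2 - 1) * (- uu θ (2 * k)) - 2 * c * uu θ (1 - 2 * k) := by
        have h1 := key (2 * (k : ℝ) - 1)
        rw [show (2 * (k:ℝ) - 1 + 2) = 2 * (k:ℝ) + 1 by ring,
          show (2 * (k:ℝ) - 1 + 1) = 2 * (k:ℝ) by ring] at h1
        -- h1 : uu (2k+1) = 2c uu(2k) - uu(2k-1)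
        have h2 : uu θ (1 - 2 * (k:ℝ)) = - uu θ (2 * (k:ℝ) - 1) := by
          unfold uu
          rw [show (1 - 2 * (k:ℝ)) * θ = -((2 * (k:ℝ) - 1) * θ) by ring,
            Real.sin_neg, neg_div]
        rw [hQ, h2]
        linear_combination (-2*c) * h1
      constructor
      · rw [Function.iterate_succ_apply', ih1, hA]
        push_cast
        rw [hP, hQ]
      · rw [Function.iterate_succ_apply', ih2, hA]
        push_cast
        rw [hS, hR]
        module
  -- decomposition of a general vector
  have hd : (1 : ℝ) - c ^ 2 ≠ 0 := by
    have : (1 : ℝ) - c ^ 2 = Real.sin θ ^ 2 := by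
      rw [hcdef, Real.sin_sq]
    rw [this]
    exact pow_ne_zero 2 hs
  set a := gform M i v with hadef
  set b := gform M j v with hbdef
  set x := (a + c * b) / (1 - c ^ 2) with hxdef
  set y := (b + c * a) / (1 - c ^ 2) with hydef
  set r := v - x • e i - y • e j with hrdef
  have hri : gform M i r = 0 := by
    rw [hrdef, gform_sub, gform_sub, gform_smul, gform_smul, hedef]
    rw [gform_single, gform_single, gram_diag, hgij, ← hadef, hxdef, hydef]
    field_simp
    ring
  have hrj : gform M j r = 0 := by
    rw [hrdef, gform_sub, gform_sub, gform_smul, gform_smul, hedef]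
    rw [gform_single, gform_single, gram_diag, hgji, ← hbdef, hxdef, hydef]
    field_simp
    ring
  have hAr : A r = r := by
    show grefl M i (grefl M j r) = r
    rw [grefl_fixed j r hrj, grefl_fixed i r hri]
  have hit_add : ∀ (k : ℕ) (w₁ w₂ : B → ℝ), A^[k] (w₁ + w₂) = A^[k] w₁ + A^[k] w₂ := by
    intro k
    induction k with
    | zero => simp
    | succ k ih =>
      intro w₁ w₂
      rw [Function.iterate_succ_apply', Function.iterate_succ_apply',
        Function.iterate_succ_apply', ih]
      show grefl M i (grefl M j _) = _
      rw [grefl_add, grefl_add]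
      rfl
  have hit_smul : ∀ (k : ℕ) (t : ℝ) (w : B → ℝ), A^[k] (t • w) = t • A^[k] w := by
    intro k
    induction k with
    | zero => simp
    | succ k ih =>
      intro t w
      rw [Function.iterate_succ_apply', Function.iterate_succ_apply', ih]
      show grefl M i (grefl M j _) = _
      rw [grefl_smul, grefl_smul]
      rfl
  have hv : v = x • e i + y • e j + r := by
    rw [hrdef]
    abel
  rw [hv, hit_add, hit_add, hit_smul, hit_smul, Function.iterate_fixed hAr]
  rw [(orbit m).1, (orbit m).2]
  rw [hu2m1, hu2m, hu12m, neg_zero, one_smul, zero_smul, one_smul, zero_smul,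
    add_zero, zero_add]

omit [Group W] in
lemma grefl_liftable {M : CoxeterMatrix B} :
    CoxeterMatrix.IsLiftable M (fun p => Function.Involutive.toPerm _ (grefl_involutive (M := M) p)) := by
  intro p q
  have hiter : ∀ (k : ℕ) (v : B → ℝ),
      ((Function.Involutive.toPerm _ (grefl_involutive (M := M) p)
        * Function.Involutive.toPerm _ (grefl_involutive (M := M) q)) ^ k) v
      = (grefl M p ∘ grefl M q)^[k] v := by
    intro k
    induction k with
    | zero => intro v; rfl
    | succ k ih =>
      intro v
      rw [pow_succ, Equiv.Perm.mul_apply, Function.iterate_succ_apply, ih]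
      rfl
  by_cases hpq : p = q
  · subst hpq
    rw [M.diagonal p, pow_one]
    apply Equiv.ext
    intro v
    show grefl M p (grefl M p v) = v
    exact grefl_involutive p v
  · rcases Nat.eq_zero_or_pos (M p q) with h0 | hpos
    · rw [h0, pow_zero]
    · have h2 : 2 ≤ M p q := by
        have := M.off_diagonal p q hpq
        omega
      apply Equiv.ext
      intro v
      rw [hiter]
      exact grefl_pow_rel p q h2 v

lemma simple_injective : Function.Injective cs.simple := by
  intro p q h
  by_contra hne
  have h1 : (cs.lift ⟨_, grefl_liftable (M := M) (B := B)⟩) (σ p)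
      = Function.Involutive.toPerm _ (grefl_involutive (M := M) p) :=
    cs.lift_apply_simple (grefl_liftable (M := M)) p
  have h2 : (cs.lift ⟨_, grefl_liftable (M := M) (B := B)⟩) (σ q)
      = Function.Involutive.toPerm _ (grefl_involutive (M := M) q) :=
    cs.lift_apply_simple (grefl_liftable (M := M)) q
  have h3 : Function.Involutive.toPerm _ (grefl_involutive (M := M) p)
      = Function.Involutive.toPerm _ (grefl_involutive (M := M) q) := by
    rw [← h1, ← h2, h]
  have hfun : grefl M p = grefl M q := by
    have := congrArg (fun (z : Equiv.Perm (B → ℝ)) => (z : (B → ℝ) → (B → ℝ))) h3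
    exact this
  have hval := congrFun (congrFun hfun (Pi.single p 1)) p
  unfold grefl at hval
  rw [gform_single, gform_single, gram_diag] at hval
  simp only [Pi.sub_apply, Pi.smul_apply, Pi.single_eq_same, smul_eq_mul] at hval
  rw [Pi.single_eq_of_ne hne] at hval
  norm_num at hval

end Geometric2

end LazyWalkAux

/-- The number of lazy walks of length `n` (each step an element of `Option B`,
interpreted as `1` for `none` and the simple reflection `cs.simple i` for `some i`)
whose steps multiply, in order, to `w`. -/
noncomputable def lazyWalkCount {B W : Type*} [Group W] {M : CoxeterMatrix B}
    (cs : CoxeterSystem M W) (n : ℕ) (w : W) : ℕ :=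
  Nat.card {f : Fin n → Option B //
    (List.ofFn fun j => ((f j).elim 1 cs.simple)).prod = w}

namespace LazyWalkAux

variable {B W : Type*} [Group W] {M : CoxeterMatrix B} (cs : CoxeterSystem M W)

local prefix:100 "σ" => cs.simple
local prefix:100 "ℓ" => cs.length

omit [Group W] in
lemma nat_card_sigma {ι : Type*} [Fintype ι] (α : ι → Type*) [∀ i, Finite (α i)] :
    Nat.card (Σ i, α i) = ∑ i, Nat.card (α i) := by
  letI : ∀ i, Fintype (α i) := fun i => Fintype.ofFinite _
  rw [Nat.card_eq_fintype_card]
  rw [Fintype.card_sigma]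
  congr 1
  funext i
  rw [Nat.card_eq_fintype_card]

section Counting
variable [Fintype B]

lemma stepmul (a : Option B) : (a.elim 1 cs.simple) * (a.elim 1 cs.simple) = 1 := by
  cases a
  · exact one_mul 1
  · exact cs.simple_mul_simple_self _

lemma lazyWalkCount_succ (n : ℕ) (w : W) :
    lazyWalkCount cs (n+1) w
      = ∑ a : Option B, lazyWalkCount cs n (w * (a.elim 1 cs.simple)) := by
  have hprod : ∀ f : Fin (n+1) → Option B,
      (List.ofFn fun j => ((f j).elim 1 cs.simple)).prod
        = (List.ofFn fun k : Fin n => ((f k.castSucc).elim 1 cs.simple)).prod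
          * ((f (Fin.last n)).elim 1 cs.simple) := by
    intro f
    rw [List.ofFn_succ' (fun j => ((f j).elim 1 cs.simple)), List.prod_concat]
  have E : {f : Fin (n+1) → Option B //
        (List.ofFn fun j => ((f j).elim 1 cs.simple)).prod = w}
      ≃ Σ a : Option B, {g : Fin n → Option B //
          (List.ofFn fun j => ((g j).elim 1 cs.simple)).prod = w * (a.elim 1 cs.simple)} := by
    refine Equiv.trans
      (Equiv.sigmaFiberEquiv (fun f : {f : Fin (n+1) → Option B //
        (List.ofFn fun j => ((f j).elim 1 cs.simple)).prod = w} =>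
          f.1 (Fin.last n))).symm
      (Equiv.sigmaCongrRight ?_)
    intro a
    refine ⟨fun x => ⟨fun k => x.1.1 k.castSucc, ?_⟩,
           fun g => ⟨⟨Fin.snoc g.1 a, ?_⟩, by simp⟩, ?_, ?_⟩
    · have h1 := x.1.2
      rw [hprod, x.2] at h1
      have h2 := congrArg (fun z => z * (a.elim 1 cs.simple)) h1
      simpa only [mul_assoc, stepmul, mul_one] using h2
    · rw [hprod]
      simp only [Fin.snoc_castSucc, Fin.snoc_last]
      rw [g.2, mul_assoc, stepmul, mul_one]
    · intro x
      apply Subtype.ext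
      apply Subtype.ext
      show (Fin.snoc (fun k => x.1.1 k.castSucc) a : Fin (n+1) → Option B) = x.1.1
      funext k
      refine Fin.lastCases ?_ ?_ k
      · rw [Fin.snoc_last, x.2]
      · intro k0
        rw [Fin.snoc_castSucc]
    · intro g
      apply Subtype.ext
      funext k
      show (Fin.snoc g.1 a : Fin (n+1) → Option B) (Fin.castSucc k) = g.1 k
      rw [Fin.snoc_castSucc]
  show Nat.card _ = _
  rw [Nat.card_congr E, nat_card_sigma]
  rfl

lemma key_le (n : ℕ) : ∀ t x : W, cs.IsReflection t → ℓ x < ℓ (t * x) →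
    lazyWalkCount cs n (t * x) ≤ lazyWalkCount cs n x := by
  induction n with
  | zero =>
    intro t x ht h
    have hne : t * x ≠ 1 := by
      intro h1
      rw [h1] at h
      simp [cs.length_one] at h
    have hE : IsEmpty {f : Fin 0 → Option B //
        (List.ofFn fun j => ((f j).elim 1 cs.simple)).prod = t * x} := by
      constructor
      rintro ⟨f, hf⟩
      apply hne
      rw [← hf]
      simp
    show Nat.card _ ≤ _
    rw [Nat.card_of_isEmpty]
    exact Nat.zero_le _
  | succ n IH =>
    intro t x ht h
    rw [lazyWalkCount_succ, lazyWalkCount_succ]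
    by_cases hex : ∃ j0 : B, σ j0 = x⁻¹ * t * x
    · obtain ⟨j0, hj0⟩ := hex
      rw [← Equiv.sum_comp (Equiv.swap (none : Option B) (some j0))
        (fun a => lazyWalkCount cs n (t * x * (a.elim 1 cs.simple)))]
      apply Finset.sum_le_sum
      intro a _
      rcases a with _ | j
      · -- a = none : swapped to j0
        rw [Equiv.swap_apply_left]
        have e1 : t * x * ((some j0).elim 1 cs.simple) = x := by
          show t * x * σ j0 = x
          rw [hj0]
          have : t * x * (x⁻¹ * t * x) = (t * t) * x := by group
          rw [this, ht.mul_self, one_mul]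
        rw [e1]
        show lazyWalkCount cs n x ≤ lazyWalkCount cs n (x * 1)
        rw [mul_one]
      · by_cases hj : j = j0
        · subst hj
          rw [Equiv.swap_apply_right]
          have e2 : x * ((some j).elim 1 cs.simple) = t * x := by
            show x * σ j = t * x
            rw [hj0]
            have : x * (x⁻¹ * t * x) = (x * x⁻¹) * t * x := by group
            rw [this, mul_inv_cancel, one_mul]
          rw [e2]
          show lazyWalkCount cs n (t * x * 1) ≤ _
          rw [mul_one]
        · rw [Equiv.swap_apply_of_ne_of_ne (by simp) (by simp [hj])]
          show lazyWalkCount cs n (t * x * σ j) ≤ lazyWalkCount cs n (x * σ j)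
          have hne : x⁻¹ * t * x ≠ σ j := by
            intro hcon
            exact hj (simple_injective cs (hj0.trans hcon)).symm
          rw [mul_assoc]
          exact IH t (x * σ j) ht (no_crossing cs x t j ht h hne)
    · apply Finset.sum_le_sum
      intro a _
      rcases a with _ | j
      · show lazyWalkCount cs n (t * x * 1) ≤ lazyWalkCount cs n (x * 1)
        rw [mul_one, mul_one]
        exact IH t x ht h
      · show lazyWalkCount cs n (t * x * σ j) ≤ lazyWalkCount cs n (x * σ j)
        have hne : x⁻¹ * t * x ≠ σ j := fun hcon => hex ⟨j, hcon.symm⟩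
        rw [mul_assoc]
        exact IH t (x * σ j) ht (no_crossing cs x t j ht h hne)

end Counting

end LazyWalkAux

/-- If `ℓ(w * s) > ℓ(w)`, then for every `n` the number of lazy walks of length `n`
from the identity to `w * s` is at most the number of lazy walks of length `n` from
the identity to `w`. -/
theorem lazyWalkCount_mul_simple_le {B W : Type*} [Fintype B] [Group W]
    {M : CoxeterMatrix B} (cs : CoxeterSystem M W) (w : W) (i : B)
    (h : cs.length w < cs.length (w * cs.simple i)) (n : ℕ) :
    lazyWalkCount cs n (w * cs.simple i) ≤ lazyWalkCount cs n w := by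
  have ht : cs.IsReflection (w * cs.simple i * w⁻¹) := ⟨w, i, rfl⟩
  have hxw : (w * cs.simple i * w⁻¹) * w = w * cs.simple i := by group
  have h2 : cs.length w < cs.length ((w * cs.simple i * w⁻¹) * w) := by
    rw [hxw]
    exact h
  have hk := LazyWalkAux.key_le cs n (w * cs.simple i * w⁻¹) w ht h2
  rwa [hxw] at hk
end LazyWalkAux
end

section
/- Let (W,S) be a Coxeter system with finite index set B, and let p : Option B → ℝ≥0 be step weights satisfying p (some i) ≤ p none for every i : B. For n : ℕ and w ∈ W let Wt n w = Σ over functions f : Fin n → Option B whose pointwise interpretations multiply (in order) to w, of the product Π_{j : Fin n} p (f j). Then for all n : ℕ and all w, w' ∈ W, if w ≤_B w' in the right weak Bruhat order, then Wt n w' ≤ Wt n w. -/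
open scoped NNReal

/-- The total weight of lazy walks of length `n` (each step an element of `Option B`,
interpreted as `1` for `none` and the simple reflection `cs.simple i` for `some i`,
with step weights `p`) whose steps multiply, in order, to `w`. -/
noncomputable def lazyWalkWeight {B W : Type*} [Fintype B] [DecidableEq W] [Group W]
    {M : CoxeterMatrix B} (cs : CoxeterSystem M W) (p : Option B → ℝ≥0)
    (n : ℕ) (w : W) : ℝ≥0 :=
  ∑ f ∈ Finset.univ.filter (fun f : Fin n → Option B =>
      (List.ofFn fun j => ((f j).elim 1 cs.simple)).prod = w),
    ∏ j : Fin n, p (f j)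

namespace CoxWalkAux

open CoxeterSystem Real

set_option linter.unusedSectionVars false

section GeoPart

variable {B : Type*} {W : Type*} [Group W] {M : CoxeterMatrix B}

section Geom

variable [Fintype B]

open scoped Classical

/-- cosine matrix of a Coxeter matrix -/
noncomputable def gC (M : CoxeterMatrix B) (a b : B) : ℝ := - Real.cos (Real.pi / (M a b : ℝ))

lemma gC_symm (a b : B) : gC M a b = gC M b a := by
  unfold gC
  rw [show M a b = M b a from congrFun (congrFun M.isSymm.symm a) b]

lemma gC_diag (a : B) : gC M a a = 1 := by
  unfold gC
  rw [M.diagonal a]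
  norm_num

/-- basis vector -/
noncomputable def alph (a : B) : B → ℝ := fun b => if b = a then 1 else 0

/-- twice the bilinear-form pairing with `alph a`, as a linear functional -/
noncomputable def bilf (M : CoxeterMatrix B) (a : B) : (B → ℝ) →ₗ[ℝ] ℝ where
  toFun x := 2 * ∑ b, gC M a b * x b
  map_add' x y := by
    simp only [Pi.add_apply, mul_add, Finset.sum_add_distrib]
  map_smul' r x := by
    simp only [Pi.smul_apply, smul_eq_mul, RingHom.id_apply]
    rw [show ∑ b, gC M a b * (r * x b) = r * ∑ b, gC M a b * x b by
      rw [Finset.mul_sum]; exact Finset.sum_congr rfl fun b _ => by ring]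
    ring

lemma bilf_alph (a b : B) : bilf M a (alph b) = 2 * gC M a b := by
  show 2 * (∑ b', gC M a b' * (if b' = b then 1 else 0)) = _
  rw [show ∑ b', gC M a b' * (if b' = b then 1 else 0) = gC M a b by
    rw [Finset.sum_eq_single b]
    · simp
    · intro c _ hc; simp [hc]
    · intro h; exact absurd (Finset.mem_univ b) h]

/-- geometric reflection -/
noncomputable def grefl (M : CoxeterMatrix B) (a : B) : Module.End ℝ (B → ℝ) :=
  LinearMap.id - (bilf M a).smulRight (alph a)

lemma grefl_apply (a : B) (x : B → ℝ) : grefl M a x = x - (bilf M a x) • alph a := rfl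

theorem grefl_braid_core (a b : B) (hab : a ≠ b) (hm : 2 ≤ M a b) :
    (grefl M a * grefl M b) ^ (M a b : ℕ) = 1 := by
  set mn : ℕ := M a b with hmn
  set θ : ℝ := Real.pi / (mn : ℝ) with hθ
  set c : ℝ := Real.cos θ with hc
  have hmpos : (0:ℝ) < (mn:ℝ) := by exact_mod_cast Nat.lt_of_lt_of_le Nat.zero_lt_two hm
  have hθpos : 0 < θ := div_pos Real.pi_pos hmpos
  have hθlt : θ < Real.pi := by
    rw [hθ]
    exact div_lt_self Real.pi_pos (by exact_mod_cast Nat.lt_of_lt_of_le Nat.one_lt_two hm)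
  have hs : 0 < Real.sin θ := Real.sin_pos_of_pos_of_lt_pi hθpos hθlt
  have hsne : Real.sin θ ≠ 0 := ne_of_gt hs
  have sinI : ∀ z : ℝ, Real.sin (z + θ) = 2 * c * Real.sin z - Real.sin (z - θ) := by
    intro z; rw [Real.sin_add, Real.sin_sub]; ring
  have hgab : gC M a b = -c := rfl
  have hgba : gC M b a = -c := by rw [← gC_symm]; rfl
  have hbaa : bilf M a (alph a) = 2 := by rw [bilf_alph, gC_diag]; ring
  have hbab : bilf M a (alph b) = -(2*c) := by rw [bilf_alph, hgab]; ring
  have hbba : bilf M b (alph a) = -(2*c) := by rw [bilf_alph, hgba]; ring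
  have hbbb : bilf M b (alph b) = 2 := by rw [bilf_alph, gC_diag]; ring
  set g : Module.End ℝ (B → ℝ) := grefl M a * grefl M b with hg
  have hb1 : grefl M b (alph a) = alph a + (2*c) • alph b := by
    rw [grefl_apply, hbba]; module
  have hb2 : grefl M b (alph b) = (-1 : ℝ) • alph b := by
    rw [grefl_apply, hbbb]; module
  have hga : g (alph a) = (4*c^2-1) • alph a + (2*c) • alph b := by
    rw [hg, Module.End.mul_apply, hb1, grefl_apply, map_add, map_smul, hbaa, hbab,
      smul_eq_mul]
    match_scalars <;> ring
  have hgb : g (alph b) = (-(2*c)) • alph a + (-1 : ℝ) • alph b := by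
    rw [hg, Module.End.mul_apply, hb2, grefl_apply, map_smul, hbab, smul_eq_mul]
    match_scalars <;> ring
  have key : ∀ k : ℕ,
      (g ^ k) (alph a) = (Real.sin (2*(k:ℝ)*θ + θ)/Real.sin θ) • alph a
          + (Real.sin (2*(k:ℝ)*θ)/Real.sin θ) • alph b
      ∧ (g ^ k) (alph b) = (-(Real.sin (2*(k:ℝ)*θ))/Real.sin θ) • alph a
          + (-(Real.sin (2*(k:ℝ)*θ - θ))/Real.sin θ) • alph b := by
    intro k
    induction k with
    | zero =>
      constructor <;>
      · simp only [pow_zero, Module.End.one_apply, Nat.cast_zero]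
        rw [show 2*(0:ℝ)*θ = 0 by ring]
        simp [Real.sin_zero, zero_sub, Real.sin_neg, div_self hsne]
    | succ n ih =>
      obtain ⟨ih1, ih2⟩ := ih
      set φ : ℝ := 2*(n:ℝ)*θ with hφ
      have e1 : Real.sin (φ + 2*θ) = 2*c*Real.sin (φ+θ) - Real.sin φ := by
        have := sinI (φ + θ)
        rw [show φ+θ+θ = φ+2*θ by ring, show φ+θ-θ = φ by ring] at this
        exact this
      have e2 : Real.sin (φ + 3*θ) = 2*c*Real.sin (φ+2*θ) - Real.sin (φ+θ) := by
        have := sinI (φ + 2*θ)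
        rw [show φ+2*θ+θ = φ+3*θ by ring, show φ+2*θ-θ = φ+θ by ring] at this
        exact this
      have e3 : Real.sin (φ + θ) = 2*c*Real.sin φ - Real.sin (φ-θ) := sinI φ
      have hcast : 2*((n:ℝ)+1)*θ = φ + 2*θ := by rw [hφ]; ring
      constructor
      · rw [pow_succ', Module.End.mul_apply, ih1, map_add, map_smul, map_smul, hga, hgb]
        push_cast
        rw [show 2*((n:ℝ)+1)*θ + θ = φ + 3*θ by rw [hφ]; ring, hcast]
        match_scalars
        · simp only [e2, e1, e3]; field_simp; ring
        · simp only [e2, e1, e3]; field_simp; ring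
      · rw [pow_succ', Module.End.mul_apply, ih2, map_add, map_smul, map_smul, hga, hgb]
        push_cast
        rw [show 2*((n:ℝ)+1)*θ - θ = φ + θ by rw [hφ]; ring, hcast]
        match_scalars
        · simp only [e2, e1, e3]; field_simp; ring
        · simp only [e2, e1, e3]; field_simp; ring
  have h2pi : 2*(mn:ℝ)*θ = 2*Real.pi := by
    rw [hθ]; field_simp
  have hgma : (g ^ mn) (alph a) = alph a := by
    rw [(key mn).1, h2pi, show 2*Real.pi + θ = θ + 2*Real.pi by ring, Real.sin_add_two_pi,
      Real.sin_two_pi, div_self hsne]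
    match_scalars <;> ring
  have hgmb : (g ^ mn) (alph b) = alph b := by
    rw [(key mn).2, h2pi, show 2*Real.pi - θ = 2*Real.pi - θ by ring, Real.sin_two_pi_sub,
      Real.sin_two_pi]
    rw [neg_neg, div_self hsne]
    match_scalars <;> ring
  -- decomposition of an arbitrary vector
  apply LinearMap.ext
  intro x
  set Ba : ℝ := bilf M a x with hBa
  set Bb : ℝ := bilf M b x with hBb
  have hd : Real.sin θ ^ 2 = 1 - c^2 := by
    have := Real.sin_sq_add_cos_sq θ
    rw [hc]; linarith
  have hdne : 1 - c^2 ≠ 0 := by rw [← hd]; positivity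
  set P : ℝ := (Ba + c*Bb)/(2*(1-c^2)) with hP
  set Q : ℝ := (Bb + c*Ba)/(2*(1-c^2)) with hQ
  set z : B → ℝ := x - P • alph a - Q • alph b with hz
  have hza : bilf M a z = 0 := by
    rw [hz, map_sub, map_sub, map_smul, map_smul, hbaa, hbab, ← hBa, hP, hQ]
    simp only [smul_eq_mul]; field_simp
    ring
  have hzb : bilf M b z = 0 := by
    rw [hz, map_sub, map_sub, map_smul, map_smul, hbba, hbbb, ← hBb, hP, hQ]
    simp only [smul_eq_mul]; field_simp
    ring
  have hgbz : grefl M b z = z := by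
    rw [grefl_apply, hzb, zero_smul, sub_zero]
  have hgz : g z = z := by
    rw [hg, Module.End.mul_apply, hgbz, grefl_apply, hza, zero_smul, sub_zero]
  have hgkz : ∀ k : ℕ, (g ^ k) z = z := by
    intro k
    induction k with
    | zero => simp
    | succ n ih => rw [pow_succ, Module.End.mul_apply, hgz, ih]
  have hx : x = z + P • alph a + Q • alph b := by
    rw [hz]; module
  rw [Module.End.one_apply]
  conv_lhs => rw [hx]
  rw [map_add, map_add, map_smul, map_smul, hgkz, hgma, hgmb, ← hx]

theorem grefl_liftable : M.IsLiftable (grefl M) := by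
  intro a b
  rcases eq_or_ne a b with rfl | hab
  · rw [M.diagonal a, pow_one]
    apply LinearMap.ext
    intro x
    have h1 : bilf M a (alph a) = 2 := by rw [bilf_alph, gC_diag]; ring
    rw [Module.End.mul_apply, Module.End.one_apply]
    conv_lhs => rw [grefl_apply]
    rw [grefl_apply, map_sub, map_smul, h1, smul_eq_mul]
    match_scalars <;> ring
  · rcases Nat.eq_zero_or_pos (M a b) with h0 | hpos
    · rw [h0, pow_zero]
    · have hm : 2 ≤ M a b := by
        have := M.off_diagonal a b hab
        omega
      exact grefl_braid_core a b hab hm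

variable (cs : CoxeterSystem M W)

theorem simple_injective : Function.Injective cs.simple := by
  intro i j hij
  by_contra hne
  have h1 : grefl M i = grefl M j := by
    have := cs.lift_apply_simple (grefl_liftable (M := M)) i
    rw [hij, cs.lift_apply_simple (grefl_liftable (M := M)) j] at this
    exact this.symm
  have h2 : grefl M i (alph i) = grefl M j (alph i) := by rw [h1]
  rw [grefl_apply, grefl_apply, bilf_alph, bilf_alph, gC_diag, gC_symm] at h2
  have h3 := congrFun h2 i
  simp only [Pi.sub_apply, Pi.smul_apply, smul_eq_mul] at h3
  rw [show alph j i = 0 by simp [alph, hne], show alph i i = 1 by simp [alph]] at h3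
  norm_num at h3

end Geom


end GeoPart

section ParPart

variable {B : Type*} {W : Type*} [Group W] {M : CoxeterMatrix B} [DecidableEq W]

local prefix:100 "σ" => CoxeterSystem.simple

section Parity

variable (cs : CoxeterSystem M W)

/-- The standard parity permutation attached to a simple reflection. -/
def pflip (i : B) : Equiv.Perm (W × ZMod 2) :=
  Function.Involutive.toPerm
    (fun q => (cs.simple i * q.1 * cs.simple i, q.2 + if q.1 = cs.simple i then 1 else 0)) (by
      intro q
      obtain ⟨t, e⟩ := q
      simp only
      have h1 : cs.simple i * (cs.simple i * t * cs.simple i) * cs.simple i = t := by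
        rw [show cs.simple i * (cs.simple i * t * cs.simple i) * cs.simple i
            = (cs.simple i * cs.simple i) * t * (cs.simple i * cs.simple i) by group,
          cs.simple_mul_simple_self, one_mul, mul_one]
      have h2 : (cs.simple i * t * cs.simple i = cs.simple i) ↔ (t = cs.simple i) := by
        constructor
        · intro h
          rw [← h1, h]
          rw [show cs.simple i * cs.simple i * cs.simple i
              = (cs.simple i * cs.simple i) * cs.simple i by group,
            cs.simple_mul_simple_self, one_mul]
        · intro h
          rw [h, show cs.simple i * cs.simple i * cs.simple i
              = (cs.simple i * cs.simple i) * cs.simple i by group,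
            cs.simple_mul_simple_self, one_mul]
      refine Prod.ext h1 ?_
      simp only [h2]
      rcases eq_or_ne t (cs.simple i) with h | h
      · rw [if_pos h]
        show e + 1 + 1 = e
        have : ∀ x : ZMod 2, x + 1 + 1 = x := by decide
        exact this e
      · rw [if_neg h, add_zero, add_zero])

lemma pflip_apply (i : B) (t : W) (e : ZMod 2) :
    pflip cs i (t, e) = (cs.simple i * t * cs.simple i, e + if t = cs.simple i then 1 else 0) :=
  rfl

lemma pflip_liftable : M.IsLiftable (fun i => pflip cs i) := by
  intro i j
  rcases Nat.eq_zero_or_pos (M i j) with h0 | hmpos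
  · rw [h0, pow_zero]
  set m : ℕ := M i j with hm
  set a : W := cs.simple i * cs.simple j with ha
  have ham : a ^ m = 1 := cs.simple_mul_simple_pow i j
  have hainv : a⁻¹ = cs.simple j * cs.simple i := by
    rw [ha, mul_inv_rev, cs.inv_simple, cs.inv_simple]
  have hcomm : ∀ r : ℕ, cs.simple j * a ^ r = a⁻¹ ^ r * cs.simple j := by
    intro r
    induction r with
    | zero => simp
    | succ n ih =>
      rw [pow_succ, ← mul_assoc, ih, mul_assoc, show cs.simple j * a = a⁻¹ * cs.simple j by
        rw [hainv, ha]; group, pow_succ]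
      group
  have key : ∀ (k : ℕ) (t : W) (e : ZMod 2),
      ((pflip cs i * pflip cs j) ^ k) (t, e) =
        (a ^ k * t * (a ^ k)⁻¹, e + ∑ r ∈ Finset.range k,
          ((if a ^ r * t * (a ^ r)⁻¹ = cs.simple j then (1 : ZMod 2) else 0) +
           (if cs.simple j * (a ^ r * t * (a ^ r)⁻¹) * cs.simple j = cs.simple i
             then (1 : ZMod 2) else 0))) := by
    intro k
    induction k with
    | zero => intro t e; simp
    | succ n ih =>
      intro t e
      have hconj : ∀ x : W, cs.simple i * (cs.simple j * x * cs.simple j) * cs.simple i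
          = a * x * a⁻¹ := by
        intro x
        rw [hainv, ha]
        group
      rw [pow_succ', Equiv.Perm.mul_apply, ih t e, Equiv.Perm.mul_apply, pflip_apply,
        pflip_apply]
      refine Prod.ext ?_ ?_
      · show cs.simple i * (cs.simple j * (a ^ n * t * (a ^ n)⁻¹) * cs.simple j) * cs.simple i
          = a ^ (n+1) * t * (a ^ (n+1))⁻¹
        rw [hconj]
        group
      · show e + (∑ r ∈ Finset.range n, _) + _ + _ = e + (∑ r ∈ Finset.range (n+1), _)
        rw [Finset.sum_range_succ]
        abel
  -- rewrite the conditions in terms of powers of `a`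
  have hcond1 : ∀ (r : ℕ) (t : W),
      (a ^ r * t * (a ^ r)⁻¹ = cs.simple j) ↔ (a ^ (2*r) * t = cs.simple j) := by
    intro r t
    have hbridge : (a ^ r)⁻¹ * cs.simple j * a ^ r = (a ^ (2*r))⁻¹ * cs.simple j := by
      calc (a ^ r)⁻¹ * cs.simple j * a ^ r = (a ^ r)⁻¹ * (cs.simple j * a ^ r) := by group
        _ = (a ^ r)⁻¹ * (a⁻¹ ^ r * cs.simple j) := by rw [hcomm r]
        _ = (a ^ (2*r))⁻¹ * cs.simple j := by group
    constructor
    · intro h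
      have ht : t = (a ^ r)⁻¹ * cs.simple j * a ^ r := by rw [← h]; group
      rw [ht, hbridge]
      group
    · intro h
      have ht : t = (a ^ (2*r))⁻¹ * cs.simple j := by rw [← h]; group
      rw [ht, ← hbridge]
      group
  have hcond2 : ∀ (r : ℕ) (t : W),
      (cs.simple j * (a ^ r * t * (a ^ r)⁻¹) * cs.simple j = cs.simple i)
        ↔ (a ^ (2*r+1) * t = cs.simple j) := by
    intro r t
    have hsjs : (cs.simple j)⁻¹ * cs.simple i * (cs.simple j)⁻¹ = a⁻¹ * cs.simple j := by
      rw [cs.inv_simple, hainv]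
    have hbridge : (a ^ r)⁻¹ * (a⁻¹ * cs.simple j) * a ^ r = (a ^ (2*r+1))⁻¹ * cs.simple j := by
      calc (a ^ r)⁻¹ * (a⁻¹ * cs.simple j) * a ^ r
          = ((a ^ r)⁻¹ * a⁻¹) * (cs.simple j * a ^ r) := by group
        _ = ((a ^ r)⁻¹ * a⁻¹) * (a⁻¹ ^ r * cs.simple j) := by rw [hcomm r]
        _ = (a ^ (2*r+1))⁻¹ * cs.simple j := by group
    constructor
    · intro h
      have ht : t = (a ^ r)⁻¹ * ((cs.simple j)⁻¹ * cs.simple i * (cs.simple j)⁻¹) * a ^ r := by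
        rw [← h]; group
      rw [hsjs] at ht
      rw [ht, hbridge]
      group
    · intro h
      have ht : t = (a ^ (2*r+1))⁻¹ * cs.simple j := by rw [← h]; group
      rw [ht, ← hbridge, ← hsjs]
      group
  -- now show the total parity vanishes
  apply Equiv.ext
  rintro ⟨t, e⟩
  rw [show ((1 : Equiv.Perm (W × ZMod 2))) (t, e) = (t, e) from rfl, key m t e, ham]
  refine Prod.ext (by group) ?_
  show e + _ = e
  rw [show (∑ r ∈ Finset.range m,
      ((if a ^ r * t * (a ^ r)⁻¹ = cs.simple j then (1 : ZMod 2) else 0) +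
       (if cs.simple j * (a ^ r * t * (a ^ r)⁻¹) * cs.simple j = cs.simple i
         then (1 : ZMod 2) else 0)))
      = ∑ r ∈ Finset.range m,
      ((if a ^ (2*r) * t = cs.simple j then (1 : ZMod 2) else 0) +
       (if a ^ (2*r+1) * t = cs.simple j then (1 : ZMod 2) else 0)) from
    Finset.sum_congr rfl fun r _ => by
      rw [if_congr (hcond1 r t) rfl rfl, if_congr (hcond2 r t) rfl rfl]]
  set gf : ℕ → ZMod 2 := fun k => if a ^ k * t = cs.simple j then (1 : ZMod 2) else 0 with hgf
  have pairup : ∀ N : ℕ, (∑ r ∈ Finset.range N, (gf (2*r) + gf (2*r+1)))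
      = ∑ k ∈ Finset.range (2*N), gf k := by
    intro N
    induction N with
    | zero => simp
    | succ n ih =>
      rw [Finset.sum_range_succ, ih, show 2*(n+1) = (2*n+1)+1 by ring, Finset.sum_range_succ,
        Finset.sum_range_succ]
      abel
  rw [pairup m]
  have hper : ∀ k, gf (k + m) = gf k := by
    intro k
    rw [hgf]
    simp only [pow_add, ham, mul_one]
  have hzero : (∑ k ∈ Finset.range (2*m), gf k) = 0 := by
    apply Finset.sum_involution (fun k _ => if k < m then k + m else k - m)
    · intro k hk
      rcases lt_or_ge k m with h | h
      · rw [if_pos h, hper k]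
        have : ∀ x : ZMod 2, x + x = 0 := by decide
        exact this _
      · rw [if_neg (not_lt.mpr h), show gf (k - m) = gf k by
          rw [← hper (k - m), Nat.sub_add_cancel h]]
        have : ∀ x : ZMod 2, x + x = 0 := by decide
        exact this _
    · intro k hk _
      rcases lt_or_ge k m with h | h
      · rw [if_pos h]; omega
      · rw [if_neg (not_lt.mpr h)]
        rw [Finset.mem_range] at hk
        omega
    · intro k hk
      rw [Finset.mem_range] at hk ⊢
      rcases lt_or_ge k m with h | h
      · rw [if_pos h]; omega
      · rw [if_neg (not_lt.mpr h)]; omega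
    · intro k hk
      rw [Finset.mem_range] at hk
      rcases lt_or_ge k m with h | h
      · rw [if_pos h, if_neg (by omega : ¬ (k + m < m))]
        omega
      · rw [if_neg (not_lt.mpr h), if_pos (by omega : k - m < m)]
        omega
  rw [hzero, add_zero]

/-- The parity representation. -/
def prho : W →* Equiv.Perm (W × ZMod 2) := cs.lift ⟨fun i => pflip cs i, pflip_liftable cs⟩

/-- The reflection cocycle. -/
def eta (w t : W) : ZMod 2 := ((prho cs w) (t, 0)).2

lemma prho_simple (i : B) : prho cs (cs.simple i) = pflip cs i :=
  cs.lift_apply_simple (pflip_liftable cs) i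

lemma prho_apply (w : W) : ∀ (t : W) (e : ZMod 2),
    prho cs w (t, e) = (w * t * w⁻¹, eta cs w t + e) := by
  induction w using cs.simple_induction_left with
  | one =>
    intro t e
    have h0 : eta cs 1 t = 0 := by
      unfold eta
      rw [map_one]
      rfl
    rw [map_one, h0]
    simp
  | mul_simple_left w i ih =>
    intro t e
    have hgen : ∀ e' : ZMod 2, prho cs (cs.simple i * w) (t, e')
        = (cs.simple i * w * t * (cs.simple i * w)⁻¹,
            (eta cs w t + if w * t * w⁻¹ = cs.simple i then 1 else 0) + e') := by
      intro e'
      rw [map_mul, Equiv.Perm.mul_apply, ih t e', prho_simple, pflip_apply]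
      refine Prod.ext ?_ ?_
      · show cs.simple i * (w * t * w⁻¹) * cs.simple i = _
        rw [mul_inv_rev, cs.inv_simple]
        group
      · show eta cs w t + e' + _ = _
        abel
    have heta : eta cs (cs.simple i * w) t
        = eta cs w t + if w * t * w⁻¹ = cs.simple i then 1 else 0 := by
      have h5 := congrArg Prod.snd (hgen 0)
      simpa [eta] using h5
    rw [hgen e, heta]

lemma eta_one (t : W) : eta cs 1 t = 0 := by
  unfold eta
  rw [map_one]
  rfl

lemma eta_mul (u v t : W) : eta cs (u * v) t = eta cs u (v * t * v⁻¹) + eta cs v t := by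
  unfold eta
  rw [map_mul, Equiv.Perm.mul_apply]
  rw [prho_apply cs v t 0, prho_apply cs u (v * t * v⁻¹) (eta cs v t + 0)]
  simp [eta]

lemma eta_simple (i : B) (t : W) :
    eta cs (cs.simple i) t = if t = cs.simple i then 1 else 0 := by
  unfold eta
  rw [prho_simple, pflip_apply, zero_add]

lemma eta_inv_conj (u t : W) : eta cs u⁻¹ (u * t * u⁻¹) = eta cs u t := by
  have h := eta_mul cs u⁻¹ u t
  rw [inv_mul_cancel, eta_one] at h
  have : ∀ x y : ZMod 2, 0 = x + y → x = y := by decide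
  exact this _ _ h

lemma eta_wordProd (ω : List B) (t : W) :
    eta cs (cs.wordProd ω) t = ((cs.rightInvSeq ω).count t : ZMod 2) := by
  induction ω with
  | nil =>
    rw [cs.wordProd_nil, eta_one]
    rfl
  | cons i ω ih =>
    rw [cs.wordProd_cons, eta_mul, ih, eta_simple]
    have hris : cs.rightInvSeq (i :: ω)
        = ((cs.wordProd ω)⁻¹ * cs.simple i * cs.wordProd ω) :: cs.rightInvSeq ω := rfl
    rw [hris, List.count_cons]
    have hiff : ((cs.wordProd ω)⁻¹ * cs.simple i * cs.wordProd ω == t) = true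
        ↔ cs.wordProd ω * t * (cs.wordProd ω)⁻¹ = cs.simple i := by
      rw [beq_iff_eq]
      constructor
      · intro h; rw [← h]; group
      · intro h; rw [← h]; group
    push_cast
    rcases eq_or_ne (cs.wordProd ω * t * (cs.wordProd ω)⁻¹) (cs.simple i) with h | h
    · rw [if_pos h, if_pos (hiff.mpr h)]
      abel
    · rw [if_neg h, if_neg (fun hc => h (hiff.mp hc))]
      abel

lemma length_lt_of_eta_one {w t : W} (h : eta cs w t = 1) : cs.length (w * t) < cs.length w := by
  obtain ⟨ω, hred, hw⟩ := cs.exists_reduced_word' w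
  rw [hw, eta_wordProd] at h
  have hcount : (cs.rightInvSeq ω).count t ≠ 0 := by
    intro hc
    rw [hc] at h
    exact absurd h (by decide)
  have hmem : t ∈ cs.rightInvSeq ω := List.count_pos_iff.mp (Nat.pos_of_ne_zero hcount)
  obtain ⟨k, hk, hget⟩ := List.getElem_of_mem hmem
  have hgetD : (cs.rightInvSeq ω).getD k 1 = t := by
    rw [List.getD_eq_getElem _ _ hk, hget]
  have hprod := cs.wordProd_mul_getD_rightInvSeq ω k
  rw [hgetD] at hprod
  have hlen : cs.length (cs.wordProd ω * t) ≤ (ω.eraseIdx k).length := by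
    rw [hprod]
    exact cs.length_wordProd_le _
  rw [cs.length_rightInvSeq] at hk
  rw [List.length_eraseIdx, if_pos hk] at hlen
  rw [hw]
  have hlw : cs.length (cs.wordProd ω) = ω.length := hred
  omega

lemma eta_refl_self {t : W} (ht : cs.IsReflection t) : eta cs t t = 1 := by
  obtain ⟨v, i, rfl⟩ := ht
  rw [show v * cs.simple i * v⁻¹ = v * (cs.simple i * v⁻¹) by group, eta_mul]
  have h2 : cs.simple i * v⁻¹ * (v * (cs.simple i * v⁻¹)) * (cs.simple i * v⁻¹)⁻¹
      = cs.simple i := by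
    rw [mul_inv_rev, inv_inv, cs.inv_simple,
      show cs.simple i * v⁻¹ * (v * (cs.simple i * v⁻¹)) * (v * cs.simple i)
        = cs.simple i * (cs.simple i * cs.simple i) by group,
      cs.simple_mul_simple_self, mul_one]
  rw [h2, eta_mul]
  have h3 : v⁻¹ * (v * (cs.simple i * v⁻¹)) * v⁻¹⁻¹ = cs.simple i := by group
  rw [h3, eta_simple, if_pos rfl]
  have h4 : eta cs v⁻¹ (v * (cs.simple i * v⁻¹)) = eta cs v (cs.simple i) := by
    have h5 := eta_inv_conj cs v (cs.simple i)
    rw [show v * cs.simple i * v⁻¹ = v * (cs.simple i * v⁻¹) by group] at h5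
    exact h5
  rw [h4]
  exact (by decide : ∀ x : ZMod 2, x + (1 + x) = 1) _

lemma eta_one_of_length_lt {w t : W} (ht : cs.IsReflection t) (h : cs.length (w * t) < cs.length w) :
    eta cs w t = 1 := by
  by_contra hne
  have h0 : eta cs w t = 0 := by
    have : ∀ x : ZMod 2, x ≠ 1 → x = 0 := by decide
    exact this _ hne
  have h1 : eta cs (w * t) t = 1 := by
    rw [eta_mul]
    have htt : t * t * t⁻¹ = t := by rw [ht.mul_self, one_mul, ht.inv]
    rw [htt, h0, eta_refl_self cs ht]
    exact zero_add 1
  have h2 := length_lt_of_eta_one cs h1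
  rw [mul_assoc, ht.mul_self, mul_one] at h2
  omega

/-- The wall-crossing dichotomy. -/
lemma crossing {t : W} (ht : cs.IsReflection t) (u : W) (i : B)
    (h1 : cs.length u < cs.length (u * t)) (h2 : cs.length (cs.simple i * u * t) < cs.length (cs.simple i * u)) :
    cs.simple i * u = u * t := by
  have e0 : eta cs u t = 0 := by
    have : ∀ x : ZMod 2, x ≠ 1 → x = 0 := by decide
    refine this _ fun hc => ?_
    have := length_lt_of_eta_one cs hc
    omega
  have e1 : eta cs (cs.simple i * u) t = 1 :=
    eta_one_of_length_lt cs ht (by rwa [mul_assoc] at h2 ⊢)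
  rw [eta_mul, e0, add_zero, eta_simple] at e1
  by_cases hc : u * t * u⁻¹ = cs.simple i
  · rw [← hc]
    group
  · rw [if_neg hc] at e1
    exact absurd e1 (by decide)

end Parity


end ParPart

section WalkPart

variable {B : Type*} {W : Type*} [Group W] {M : CoxeterMatrix B} [DecidableEq W] [Fintype B]
variable (cs : CoxeterSystem M W)

/-- step element -/
def stp (o : Option B) : W := o.elim 1 cs.simple

lemma stp_mul_self (o : Option B) : stp cs o * stp cs o = 1 := by
  cases o with
  | none => simp [stp]
  | some i => exact cs.simple_mul_simple_self i

lemma walk_succ (p : Option B → ℝ≥0) (n : ℕ) (v : W) :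
    lazyWalkWeight cs p (n+1) v = ∑ o : Option B, p o * lazyWalkWeight cs p n (stp cs o * v) := by
  unfold lazyWalkWeight
  rw [Finset.sum_filter]
  rw [← Fintype.sum_equiv (Fin.consEquiv (fun _ : Fin (n+1) => Option B))
    (fun q : Option B × (Fin n → Option B) =>
      if (List.ofFn fun j => (((Fin.cons q.1 q.2 : Fin (n+1) → Option B) j).elim 1 cs.simple)).prod = v
      then ∏ j : Fin (n+1), p ((Fin.cons q.1 q.2 : Fin (n+1) → Option B) j) else 0)
    _ (fun q => rfl)]
  rw [Fintype.sum_prod_type]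
  refine Finset.sum_congr rfl fun o _ => ?_
  rw [Finset.sum_filter, Finset.mul_sum]
  refine Finset.sum_congr rfl fun g _ => ?_
  have hof : (List.ofFn fun j => (((Fin.cons o g : Fin (n+1) → Option B) j).elim 1 cs.simple)).prod
      = stp cs o * (List.ofFn fun j => ((g j).elim 1 cs.simple)).prod := by
    rw [List.ofFn_succ]
    simp only [Fin.cons_zero, Fin.cons_succ, List.prod_cons]
    rfl
  have hprod : (∏ j : Fin (n+1), p ((Fin.cons o g : Fin (n+1) → Option B) j))
      = p o * ∏ j : Fin n, p (g j) := by
    rw [Fin.prod_univ_succ]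
    simp only [Fin.cons_zero, Fin.cons_succ]
  have hcondeq : ((stp cs o * (List.ofFn fun j => ((g j).elim 1 cs.simple)).prod = v))
      ↔ (((List.ofFn fun j => ((g j).elim 1 cs.simple)).prod = stp cs o * v)) := by
    constructor
    · intro h
      rw [← h, ← mul_assoc, stp_mul_self, one_mul]
    · intro h
      rw [h, ← mul_assoc, stp_mul_self, one_mul]
  rw [hof, hprod, if_congr hcondeq rfl rfl, mul_ite, mul_zero]

lemma walk_zero (p : Option B → ℝ≥0) (v : W) (hv : v ≠ 1) : lazyWalkWeight cs p 0 v = 0 := by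
  unfold lazyWalkWeight
  rw [Finset.sum_filter]
  refine Finset.sum_eq_zero fun f _ => ?_
  rw [if_neg]
  intro hh
  rw [List.ofFn_zero] at hh
  exact hv (hh.symm ▸ rfl)

theorem main_claim (p : Option B → ℝ≥0) (hp : ∀ i : B, p (some i) ≤ p none) (n : ℕ) :
    ∀ (u t : W), cs.IsReflection t → cs.length u < cs.length (u * t) →
      lazyWalkWeight cs p n (u * t) ≤ lazyWalkWeight cs p n u := by
  induction n with
  | zero =>
    intro u t ht hlt
    have : u * t ≠ 1 := by
      intro hc
      have h0 : cs.length (u * t) = 0 := by rw [hc, cs.length_one]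
      omega
    rw [walk_zero cs p _ this]
    exact zero_le
  | succ n ih =>
    intro u t ht hlt
    classical
    rw [walk_succ, walk_succ, Fintype.sum_option, Fintype.sum_option]
    have hstpnone : ∀ x : W, stp cs none * x = x := fun x => one_mul x
    have hstpsome : ∀ (i : B) (x : W), stp cs (some i) * x = cs.simple i * x := fun i x => rfl
    simp only [hstpnone, hstpsome]
    -- dichotomy for each i
    have hdich : ∀ i : B, cs.simple i * u = u * t ∨
        (cs.length (cs.simple i * u) < cs.length (cs.simple i * u * t)) := by
      intro i
      rcases lt_or_gt_of_ne (ht.length_mul_left_ne (cs.simple i * u)) with h | h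
      · exact Or.inl (crossing cs ht u i hlt h)
      · exact Or.inr h
    by_cases hex : ∃ i₀ : B, cs.simple i₀ * u = u * t
    · obtain ⟨i₀, hi₀⟩ := hex
      rw [← Finset.add_sum_erase _ _ (Finset.mem_univ i₀),
        ← Finset.add_sum_erase _ _ (Finset.mem_univ i₀)]
      have hterm1 : cs.simple i₀ * (u * t) = u := by
        rw [← mul_assoc, hi₀, mul_assoc, ht.mul_self, mul_one]
      rw [hterm1, hi₀]
      have hmain : p none * lazyWalkWeight cs p n (u * t) + p (some i₀) * lazyWalkWeight cs p n u
          ≤ p none * lazyWalkWeight cs p n u + p (some i₀) * lazyWalkWeight cs p n (u * t) := by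
        have := mul_add_mul_le_mul_add_mul (hp i₀) (ih u t ht hlt)
        calc p none * lazyWalkWeight cs p n (u * t) + p (some i₀) * lazyWalkWeight cs p n u
            = p (some i₀) * lazyWalkWeight cs p n u + p none * lazyWalkWeight cs p n (u * t) := by ring
          _ ≤ p (some i₀) * lazyWalkWeight cs p n (u * t) + p none * lazyWalkWeight cs p n u := this
          _ = p none * lazyWalkWeight cs p n u + p (some i₀) * lazyWalkWeight cs p n (u * t) := by ring
      have hrest : ∑ i ∈ Finset.univ.erase i₀, p (some i) * lazyWalkWeight cs p n (cs.simple i * (u * t))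
          ≤ ∑ i ∈ Finset.univ.erase i₀, p (some i) * lazyWalkWeight cs p n (cs.simple i * u) := by
        refine Finset.sum_le_sum fun i hi => ?_
        have hne : i ≠ i₀ := (Finset.mem_erase.mp hi).1
        rcases hdich i with h | h
        · exfalso
          apply hne
          exact simple_injective cs (mul_right_cancel (h.trans hi₀.symm))
        · apply mul_le_mul_right
          have := ih (cs.simple i * u) t ht h
          rwa [mul_assoc] at this
      calc p none * lazyWalkWeight cs p n (u * t) + (p (some i₀) * lazyWalkWeight cs p n u
            + ∑ i ∈ Finset.univ.erase i₀, p (some i) * lazyWalkWeight cs p n (cs.simple i * (u * t)))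
          = (p none * lazyWalkWeight cs p n (u * t) + p (some i₀) * lazyWalkWeight cs p n u)
            + ∑ i ∈ Finset.univ.erase i₀, p (some i) * lazyWalkWeight cs p n (cs.simple i * (u * t)) := by
            ring
        _ ≤ (p none * lazyWalkWeight cs p n u + p (some i₀) * lazyWalkWeight cs p n (u * t))
            + ∑ i ∈ Finset.univ.erase i₀, p (some i) * lazyWalkWeight cs p n (cs.simple i * u) :=
            add_le_add hmain hrest
        _ = p none * lazyWalkWeight cs p n u + (p (some i₀) * lazyWalkWeight cs p n (u * t)
            + ∑ i ∈ Finset.univ.erase i₀, p (some i) * lazyWalkWeight cs p n (cs.simple i * u)) := by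
            ring
    · refine add_le_add (mul_le_mul_right (ih u t ht hlt) _) ?_
      refine Finset.sum_le_sum fun i _ => ?_
      rcases hdich i with h | h
      · exact absurd ⟨i, h⟩ hex
      · apply mul_le_mul_right
        have := ih (cs.simple i * u) t ht h
        rwa [mul_assoc] at this

theorem final (p : Option B → ℝ≥0) (hp : ∀ i : B, p (some i) ≤ p none) (n : ℕ) (w w' : W)
    (h : cs.length w + cs.length (w⁻¹ * w') = cs.length w') :
    lazyWalkWeight cs p n w' ≤ lazyWalkWeight cs p n w := by
  have key : ∀ (k : ℕ) (x w₀ : W), cs.length x = k →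
      cs.length w₀ + cs.length x = cs.length (w₀ * x) → lazyWalkWeight cs p n (w₀ * x) ≤ lazyWalkWeight cs p n w₀ := by
    intro k
    induction k using Nat.strong_induction_on with
    | _ k ihk =>
      intro x w₀ hk hlen
      by_cases hx : x = 1
      · rw [hx, mul_one]
      · obtain ⟨i, hdesc⟩ := cs.exists_rightDescent_of_ne_one hx
        have hdesc' : cs.length (x * cs.simple i) < cs.length x := hdesc
        set x' : W := x * cs.simple i with hx'
        have hxx : x' * cs.simple i = x := by
          rw [hx', mul_assoc, cs.simple_mul_simple_self, mul_one]
        have hx'len : cs.length x' + 1 = cs.length x := by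
          rcases cs.length_mul_simple x i with hc | hc <;> rw [← hx'] at hc
          · omega
          · exact hc
        have hwx'1 : cs.length (w₀ * x') = cs.length w₀ + cs.length x' := by
          have hub := cs.length_mul_le w₀ x'
          have hlb : cs.length (w₀ * x) ≤ cs.length (w₀ * x') + 1 := by
            have h2 := cs.length_mul_le (w₀ * x') (cs.simple i)
            rw [mul_assoc, hxx, cs.length_simple] at h2
            exact h2
          omega
        have ih1 : lazyWalkWeight cs p n (w₀ * x') ≤ lazyWalkWeight cs p n w₀ := by
          refine ihk (cs.length x') (by omega) x' w₀ rfl hwx'1.symm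
        have hstep : cs.length (w₀ * x') < cs.length (w₀ * x' * cs.simple i) := by
          rw [mul_assoc, hxx]
          omega
        have h2 : lazyWalkWeight cs p n (w₀ * x' * cs.simple i) ≤ lazyWalkWeight cs p n (w₀ * x') :=
          main_claim cs p hp n (w₀ * x') (cs.simple i) (cs.isReflection_simple i) hstep
        rw [mul_assoc, hxx] at h2
        exact le_trans h2 ih1
  have hw' : w' = w * (w⁻¹ * w') := by group
  rw [hw']
  exact key (cs.length (w⁻¹ * w')) (w⁻¹ * w') w rfl (by rw [← hw']; exact h)


end WalkPart

end CoxWalkAux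

/-- For a lazy random walk on a Coxeter group with step weights `p` in which the
identity step is at least as likely as any generator, the likelihoods of states
respect the right weak Bruhat order: if `w ≤_B w'` then after any number of steps
the walk is at least as likely to be at `w` as at `w'`. -/
theorem lazyWalkWeight_le_of_weak_bruhat_le {B W : Type*} [Fintype B] [DecidableEq W]
    [Group W] {M : CoxeterMatrix B} (cs : CoxeterSystem M W) (p : Option B → ℝ≥0)
    (hp : ∀ i : B, p (some i) ≤ p none) (n : ℕ) (w w' : W)
    (h : cs.length w + cs.length (w⁻¹ * w') = cs.length w') :
    lazyWalkWeight cs p n w' ≤ lazyWalkWeight cs p n w :=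
  CoxWalkAux.final cs p hp n w w' h
end
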